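/- arXiv:2402.17462 — 7 statements merged into one kernel-verified Lean document; each statement's English description precedes it below -/
import Mathlib

section
/- Let 𝒫 be a nonempty set of probability measures on a measurable space and let X be a random variable with sup_{P∈𝒫} E_P[X²] < ∞. Define the sublinear expectation Ē[Z] = sup_{P∈𝒫} E_P[Z]. Then min over μ ∈ ℝ of Ē[(X-μ)²] = sup over P in the convex hull of 𝒫 of Var_P(X). -/
open MeasureTheory ENNReal
set_option maxHeartbeats 2000000

variable {Ω : Type*} [MeasurableSpace Ω]

/-- Classical covariance of `X` and `Y` under `P`. -/
noncomputable def covP (P : Measure Ω) (X Y : Ω → ℝ) : ℝ :=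
  (∫ ω, X ω * Y ω ∂P) - (∫ ω, X ω ∂P) * (∫ ω, Y ω ∂P)

/-- Classical variance of `X` under `P`. -/
noncomputable def varP (P : Measure Ω) (X : Ω → ℝ) : ℝ :=
  (∫ ω, (X ω) ^ 2 ∂P) - (∫ ω, X ω ∂P) ^ 2

/-- The convex hull of a set of measures: all finite convex combinations. -/
def convHullP (S : Set (Measure Ω)) : Set (Measure Ω) :=
  { Q | ∃ (n : ℕ) (w : Fin n → ℝ≥0∞) (P : Fin n → Measure Ω),
      (∑ i, w i = 1) ∧ (∀ i, P i ∈ S) ∧ Q = ∑ i, w i • P i }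

lemma expand_sq (P : Measure Ω) [IsProbabilityMeasure P] (X : Ω → ℝ)
    (h1 : Integrable X P) (h2 : Integrable (fun ω => X ω ^ 2) P) (μ : ℝ) :
    ∫ ω, (X ω - μ) ^ 2 ∂P = (∫ ω, X ω ^ 2 ∂P) - 2 * μ * (∫ ω, X ω ∂P) + μ ^ 2 := by
  have h : ∀ ω, (X ω - μ) ^ 2 = (X ω ^ 2 - (2 * μ) * X ω) + μ ^ 2 := by intro ω; ring
  have hsub : Integrable (fun ω => X ω ^ 2 - (2 * μ) * X ω) P := h2.sub (h1.const_mul _)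
  simp_rw [h]
  rw [integral_add hsub (integrable_const _),
      integral_sub h2 (h1.const_mul _), integral_const_mul, integral_const]
  simp

lemma wne {n : ℕ} (w : Fin n → ℝ≥0∞) (hw : ∑ i, w i = 1) (i : Fin n) : w i ≠ ∞ :=
  ne_top_of_le_ne_top one_ne_top
    (hw ▸ Finset.single_le_sum (f := w) (fun _ _ => zero_le) (Finset.mem_univ i))

lemma integral_convex_comb {n : ℕ} (w : Fin n → ℝ≥0∞) (P : Fin n → Measure Ω)
    (hw : ∑ i, w i = 1) (φ : Ω → ℝ) (hφ : ∀ i, Integrable φ (P i)) :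
    ∫ ω, φ ω ∂(∑ i, w i • P i) = ∑ i, (w i).toReal * ∫ ω, φ ω ∂(P i) := by
  rw [integral_finset_sum_measure (fun i _ => (hφ i).smul_measure (wne w hw i))]
  exact Finset.sum_congr rfl fun i _ => by rw [integral_smul_measure]; rfl

lemma integrable_convex_comb {n : ℕ} (w : Fin n → ℝ≥0∞) (P : Fin n → Measure Ω)
    (hw : ∑ i, w i = 1) (φ : Ω → ℝ) (hφ : ∀ i, Integrable φ (P i)) :
    Integrable φ (∑ i, w i • P i) :=
  integrable_finset_sum_measure.2 fun i _ => (hφ i).smul_measure (wne w hw i)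

lemma prob_convex_comb {n : ℕ} (w : Fin n → ℝ≥0∞) (P : Fin n → Measure Ω)
    (hw : ∑ i, w i = 1) (hP : ∀ i, IsProbabilityMeasure (P i)) :
    IsProbabilityMeasure (∑ i, w i • P i) := by
  constructor
  simp [Measure.finset_sum_apply, Measure.smul_apply, (hP _).measure_univ, hw]

theorem stmt2 (S : Set (Measure Ω)) (hS : S.Nonempty)
    (hprob : ∀ P ∈ S, IsProbabilityMeasure P) (X : Ω → ℝ)
    (hX : ∀ P ∈ S, MemLp X 2 P)
    (hbdd : BddAbove ((fun P => ∫ ω, (X ω) ^ 2 ∂P) '' S)) :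
    (⨅ μ : ℝ, sSup ((fun P => ∫ ω, (X ω - μ) ^ 2 ∂P) '' S)) =
      sSup ((fun P => varP P X) '' convHullP S) ∧
    ∃ μ₀ : ℝ, sSup ((fun P => ∫ ω, (X ω - μ₀) ^ 2 ∂P) '' S) =
      sSup ((fun P => varP P X) '' convHullP S) := by
  obtain ⟨P₀, hP₀S⟩ := hS
  obtain ⟨M, hM⟩ := hbdd
  have hMle : ∀ P ∈ S, ∫ ω, X ω ^ 2 ∂P ≤ M := fun P hP => hM ⟨P, hP, rfl⟩
  have hInt1 : ∀ P ∈ S, Integrable X P := fun P hP => by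
    haveI := hprob P hP; exact (hX P hP).integrable one_le_two
  have hInt2 : ∀ P ∈ S, Integrable (fun ω => X ω ^ 2) P := fun P hP => by
    haveI := hprob P hP; exact (hX P hP).integrable_sq
  have hexp : ∀ P ∈ S, ∀ μ : ℝ,
      ∫ ω, (X ω - μ) ^ 2 ∂P = (∫ ω, X ω ^ 2 ∂P) - 2 * μ * (∫ ω, X ω ∂P) + μ ^ 2 := by
    intro P hP μ
    haveI := hprob P hP
    exact expand_sq P X (hInt1 P hP) (hInt2 P hP) μ
  have ha0 : ∀ P : Measure Ω, 0 ≤ ∫ ω, X ω ^ 2 ∂P :=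
    fun P => integral_nonneg fun ω => sq_nonneg _
  have hM0 : 0 ≤ M := le_trans (ha0 P₀) (hMle P₀ hP₀S)
  set s : ℝ := Real.sqrt M with hs
  have hs0 : 0 ≤ s := Real.sqrt_nonneg M
  have hsM : s ^ 2 = M := Real.sq_sqrt hM0
  have hb2 : ∀ P ∈ S, (∫ ω, X ω ∂P) ^ 2 ≤ ∫ ω, X ω ^ 2 ∂P := by
    intro P hP
    have hvar : 0 ≤ ∫ ω, (X ω - (∫ ω, X ω ∂P)) ^ 2 ∂P := integral_nonneg fun ω => sq_nonneg _
    rw [hexp P hP _] at hvar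
    nlinarith [hvar]
  have hb : ∀ P ∈ S, |∫ ω, X ω ∂P| ≤ s := by
    intro P hP
    have h1 : (∫ ω, X ω ∂P) ^ 2 ≤ M := le_trans (hb2 P hP) (hMle P hP)
    calc |∫ ω, X ω ∂P| = Real.sqrt ((∫ ω, X ω ∂P) ^ 2) := (Real.sqrt_sq_eq_abs _).symm
      _ ≤ s := Real.sqrt_le_sqrt h1
  -- the image sets
  have hne : ∀ μ : ℝ, ((fun P => ∫ ω, (X ω - μ) ^ 2 ∂P) '' S).Nonempty :=
    fun μ => ⟨_, ⟨P₀, hP₀S, rfl⟩⟩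
  have hbddμ : ∀ μ : ℝ, BddAbove ((fun P => ∫ ω, (X ω - μ) ^ 2 ∂P) '' S) := by
    intro μ
    refine ⟨M + 2 * |μ| * s + μ ^ 2, ?_⟩
    rintro y ⟨P, hP, rfl⟩
    simp only
    rw [hexp P hP μ]
    have h1 := hb P hP
    have h2 := hMle P hP
    have h3 : |2 * μ * (∫ ω, X ω ∂P)| = 2 * |μ| * |∫ ω, X ω ∂P| := by
      rw [abs_mul, abs_mul, abs_two]
    have h4 : -(2 * |μ| * s) ≤ 2 * μ * (∫ ω, X ω ∂P) := by
      have h5 : |2 * μ * (∫ ω, X ω ∂P)| ≤ 2 * |μ| * s := by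
        rw [h3]
        exact mul_le_mul_of_nonneg_left h1 (by positivity)
      linarith [neg_abs_le (2 * μ * (∫ ω, X ω ∂P))]
    linarith
  have hle_sSup : ∀ μ : ℝ, ∀ P ∈ S,
      ∫ ω, (X ω - μ) ^ 2 ∂P ≤ sSup ((fun P => ∫ ω, (X ω - μ) ^ 2 ∂P) '' S) :=
    fun μ P hP => le_csSup (hbddμ μ) ⟨P, hP, rfl⟩
  have hf0 : ∀ μ : ℝ, 0 ≤ sSup ((fun P => ∫ ω, (X ω - μ) ^ 2 ∂P) '' S) :=
    fun μ => le_trans (integral_nonneg fun ω => sq_nonneg _) (hle_sSup μ P₀ hP₀S)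
  have hf0M : sSup ((fun P => ∫ ω, (X ω - (0:ℝ)) ^ 2 ∂P) '' S) ≤ M := by
    apply csSup_le (hne 0)
    rintro y ⟨P, hP, rfl⟩
    simp only
    rw [hexp P hP 0]
    nlinarith [hMle P hP]
  -- S included in hull
  have hSsub : ∀ P ∈ S, P ∈ convHullP S := by
    intro P hP
    exact ⟨1, fun _ => 1, fun _ => P, by simp, fun _ => hP, by simp⟩
  -- facts about hull elements
  have hullfacts : ∀ Q ∈ convHullP S, varP Q X ≤ M ∧
      ∀ μ : ℝ, varP Q X ≤ sSup ((fun P => ∫ ω, (X ω - μ) ^ 2 ∂P) '' S) := by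
    rintro Q ⟨n, w, Pn, hw, hPn, rfl⟩
    haveI := prob_convex_comb w Pn hw fun i => hprob _ (hPn i)
    have hQ1 := integrable_convex_comb w Pn hw X fun i => hInt1 _ (hPn i)
    have hQ2 := integrable_convex_comb w Pn hw (fun ω => X ω ^ 2) fun i => hInt2 _ (hPn i)
    have haQ := integral_convex_comb w Pn hw (fun ω => X ω ^ 2) fun i => hInt2 _ (hPn i)
    have hbQ := integral_convex_comb w Pn hw X fun i => hInt1 _ (hPn i)
    have hsum1 : ∑ i, (w i).toReal = 1 := by
      rw [← ENNReal.toReal_sum fun i _ => wne w hw i, hw]; simp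
    have haQM : ∫ ω, X ω ^ 2 ∂(∑ i, w i • Pn i) ≤ M := by
      rw [haQ]
      calc ∑ i, (w i).toReal * ∫ ω, X ω ^ 2 ∂(Pn i)
          ≤ ∑ i, (w i).toReal * M :=
            Finset.sum_le_sum fun i _ =>
              mul_le_mul_of_nonneg_left (hMle _ (hPn i)) ENNReal.toReal_nonneg
        _ = M := by rw [← Finset.sum_mul, hsum1, one_mul]
    have hvar_def : varP (∑ i, w i • Pn i) X =
        (∫ ω, X ω ^ 2 ∂(∑ i, w i • Pn i)) - (∫ ω, X ω ∂(∑ i, w i • Pn i)) ^ 2 := rfl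
    constructor
    · rw [hvar_def]
      nlinarith [sq_nonneg (∫ ω, X ω ∂(∑ i, w i • Pn i))]
    · intro μ
      have hexpQ := expand_sq (∑ i, w i • Pn i) X hQ1 hQ2 μ
      have h1 : varP (∑ i, w i • Pn i) X ≤ ∫ ω, (X ω - μ) ^ 2 ∂(∑ i, w i • Pn i) := by
        rw [hvar_def, hexpQ]
        nlinarith [sq_nonneg ((∫ ω, X ω ∂(∑ i, w i • Pn i)) - μ)]
      refine le_trans h1 ?_
      have hIsq : ∀ i, Integrable (fun ω => (X ω - μ) ^ 2) (Pn i) := by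
        intro i
        haveI := hprob _ (hPn i)
        have he : (fun ω => (X ω - μ) ^ 2) =
            fun ω => (X ω ^ 2 - (2 * μ) * X ω) + μ ^ 2 := funext fun ω => by ring
        rw [he]
        exact ((hInt2 _ (hPn i)).sub ((hInt1 _ (hPn i)).const_mul _)).add (integrable_const _)
      rw [integral_convex_comb w Pn hw _ hIsq]
      calc ∑ i, (w i).toReal * ∫ ω, (X ω - μ) ^ 2 ∂(Pn i)
          ≤ ∑ i, (w i).toReal * sSup ((fun P => ∫ ω, (X ω - μ) ^ 2 ∂P) '' S) :=
            Finset.sum_le_sum fun i _ =>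
              mul_le_mul_of_nonneg_left (hle_sSup μ _ (hPn i)) ENNReal.toReal_nonneg
        _ = _ := by rw [← Finset.sum_mul, hsum1, one_mul]
  have hhullne : ((fun P => varP P X) '' convHullP S).Nonempty :=
    ⟨varP P₀ X, ⟨P₀, hSsub P₀ hP₀S, rfl⟩⟩
  have hVbdd : BddAbove ((fun P => varP P X) '' convHullP S) := by
    refine ⟨M, ?_⟩
    rintro y ⟨Q, hQ, rfl⟩
    exact (hullfacts Q hQ).1
  have hV_le_f : ∀ μ : ℝ, sSup ((fun P => varP P X) '' convHullP S) ≤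
      sSup ((fun P => ∫ ω, (X ω - μ) ^ 2 ∂P) '' S) := by
    intro μ
    apply csSup_le hhullne
    rintro y ⟨Q, hQ, rfl⟩
    exact (hullfacts Q hQ).2 μ
  -- Lipschitz-type estimate
  have hlip : ∀ μ ν : ℝ,
      sSup ((fun P => ∫ ω, (X ω - μ) ^ 2 ∂P) '' S) ≤
      sSup ((fun P => ∫ ω, (X ω - ν) ^ 2 ∂P) '' S) + (2 * s + |μ| + |ν|) * |μ - ν| := by
    intro μ ν
    apply csSup_le (hne μ)
    rintro y ⟨P, hP, rfl⟩
    simp only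
    have h1 := hle_sSup ν P hP
    rw [hexp P hP ν] at h1
    rw [hexp P hP μ]
    have hbP := hb P hP
    have key : ((∫ ω, X ω ^ 2 ∂P) - 2 * μ * (∫ ω, X ω ∂P) + μ ^ 2) -
        ((∫ ω, X ω ^ 2 ∂P) - 2 * ν * (∫ ω, X ω ∂P) + ν ^ 2) ≤
        (2 * s + |μ| + |ν|) * |μ - ν| := by
      have e : ((∫ ω, X ω ^ 2 ∂P) - 2 * μ * (∫ ω, X ω ∂P) + μ ^ 2) -
          ((∫ ω, X ω ^ 2 ∂P) - 2 * ν * (∫ ω, X ω ∂P) + ν ^ 2) =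
          (μ - ν) * (μ + ν - 2 * (∫ ω, X ω ∂P)) := by ring
      rw [e]
      calc (μ - ν) * (μ + ν - 2 * (∫ ω, X ω ∂P))
          ≤ |(μ - ν) * (μ + ν - 2 * (∫ ω, X ω ∂P))| := le_abs_self _
        _ = |μ - ν| * |μ + ν - 2 * (∫ ω, X ω ∂P)| := abs_mul _ _
        _ ≤ |μ - ν| * (|μ| + |ν| + 2 * s) := by
            apply mul_le_mul_of_nonneg_left ?_ (abs_nonneg _)
            have e1 : |μ + ν - 2 * (∫ ω, X ω ∂P)| ≤ |μ + ν| + |2 * (∫ ω, X ω ∂P)| := by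
              simpa [sub_eq_add_neg] using abs_add_le (μ + ν) (-(2 * (∫ ω, X ω ∂P)))
            have e2 : |μ + ν| ≤ |μ| + |ν| := abs_add_le _ _
            have e3 : |2 * (∫ ω, X ω ∂P)| = 2 * |∫ ω, X ω ∂P| := by rw [abs_mul, abs_two]
            linarith
        _ = (2 * s + |μ| + |ν|) * |μ - ν| := by ring
    linarith
  set K : ℝ := 2 * s + 1 with hK
  have hK0 : 0 < K := by simp only [hK]; linarith
  have hcont : ContinuousOn
      (fun μ : ℝ => sSup ((fun P => ∫ ω, (X ω - μ) ^ 2 ∂P) '' S)) (Set.Icc (-K) K) := by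
    have hL0 : (0:ℝ) ≤ 2 * s + 2 * K := by linarith
    apply LipschitzOnWith.continuousOn (K := Real.toNNReal (2 * s + 2 * K))
    rw [lipschitzOnWith_iff_dist_le_mul]
    intro x hx y hy
    rw [Real.dist_eq, Real.dist_eq, Real.coe_toNNReal _ hL0]
    obtain ⟨hx1, hx2⟩ := hx
    obtain ⟨hy1, hy2⟩ := hy
    have hxK : |x| ≤ K := abs_le.2 ⟨hx1, hx2⟩
    have hyK : |y| ≤ K := abs_le.2 ⟨hy1, hy2⟩
    have h1 := hlip x y
    have h2 := hlip y x
    rw [abs_sub_comm y x] at h2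
    have hmb1 : (2 * s + |x| + |y|) * |x - y| ≤ (2 * s + 2 * K) * |x - y| :=
      mul_le_mul_of_nonneg_right (by linarith) (abs_nonneg _)
    have hmb2 : (2 * s + |y| + |x|) * |x - y| ≤ (2 * s + 2 * K) * |x - y| :=
      mul_le_mul_of_nonneg_right (by linarith) (abs_nonneg _)
    rw [abs_sub_le_iff]
    exact ⟨by linarith, by linarith⟩
  obtain ⟨μ₀, hμ₀I, hmin⟩ := isCompact_Icc.exists_isMinOn
    ⟨0, Set.mem_Icc.2 ⟨by linarith, by linarith⟩⟩ hcont
  have hfμ₀M : sSup ((fun P => ∫ ω, (X ω - μ₀) ^ 2 ∂P) '' S) ≤ M :=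
    le_trans (isMinOn_iff.mp hmin 0 (Set.mem_Icc.2 ⟨by linarith, by linarith⟩)) hf0M
  have hminAll : ∀ μ : ℝ, sSup ((fun P => ∫ ω, (X ω - μ₀) ^ 2 ∂P) '' S) ≤
      sSup ((fun P => ∫ ω, (X ω - μ) ^ 2 ∂P) '' S) := by
    intro μ
    by_cases hμ : μ ∈ Set.Icc (-K) K
    · exact isMinOn_iff.mp hmin μ hμ
    · rw [Set.mem_Icc] at hμ
      push_neg at hμ
      have hb₀ := hb P₀ hP₀S
      have h1 := hle_sSup μ P₀ hP₀S
      rw [hexp P₀ hP₀S μ] at h1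
      have hb2₀ := hb2 P₀ hP₀S
      have hble : -s ≤ (∫ ω, X ω ∂P₀) ∧ (∫ ω, X ω ∂P₀) ≤ s := abs_le.1 hb₀
      have hcase : (s + 1) ^ 2 < (μ - ∫ ω, X ω ∂P₀) ^ 2 := by
        rcases le_or_gt 0 μ with hpos | hneg
        · have hKμ : K < μ := hμ (by linarith)
          have e : s + 1 < μ - ∫ ω, X ω ∂P₀ := by
            simp only [hK] at hKμ; linarith [hble.2]
          nlinarith [e, hs0]
        · have hKμ : μ < -K := by
            by_contra hcon
            push_neg at hcon
            exact absurd (hμ hcon) (by linarith)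
          have e : s + 1 < (∫ ω, X ω ∂P₀) - μ := by
            simp only [hK] at hKμ; linarith [hble.1]
          nlinarith [e, hs0]
      linarith [h1, hb2₀, hsM, hs0, hcase, hfμ₀M]
  -- key approximation step
  have hstep : ∀ t : ℝ, 0 < t → t ≤ 1 →
      sSup ((fun P => ∫ ω, (X ω - μ₀) ^ 2 ∂P) '' S) - t * (2 * s + 2 * |μ₀| + 5) ≤
      sSup ((fun P => varP P X) '' convHullP S) := by
    intro t ht ht1
    have hA : sSup ((fun P => ∫ ω, (X ω - μ₀) ^ 2 ∂P) '' S) - t ^ 2 <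
        sSup ((fun P => ∫ ω, (X ω - (μ₀ + t)) ^ 2 ∂P) '' S) :=
      lt_of_lt_of_le (by linarith [pow_pos ht 2]) (hminAll (μ₀ + t))
    obtain ⟨yp, ⟨Pp, hPp, rfl⟩, hyp⟩ := exists_lt_of_lt_csSup (hne (μ₀ + t)) hA
    simp only at hyp
    rw [hexp Pp hPp (μ₀ + t)] at hyp
    have hgPp := hle_sSup μ₀ Pp hPp
    rw [hexp Pp hPp μ₀] at hgPp
    have hbpS := abs_le.1 (hb Pp hPp)
    set ap : ℝ := ∫ ω, X ω ^ 2 ∂Pp with hap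
    set bp : ℝ := ∫ ω, X ω ∂Pp with hbp
    have hbplt : bp < μ₀ + t := by
      have hpos : 0 < t * (μ₀ - bp + t) := by nlinarith [hyp, hgPp]
      by_contra hcon
      push_neg at hcon
      nlinarith [hpos, ht]
    have e0 : ap - 2 * (μ₀ + t) * bp + (μ₀ + t) ^ 2 =
        (ap - 2 * μ₀ * bp + μ₀ ^ 2) + 2 * (t * (μ₀ - bp)) + t * t := by ring
    rw [e0] at hyp
    have e1 : t * (μ₀ - bp) ≤ t * (|μ₀| + s) :=
      mul_le_mul_of_nonneg_left (by linarith [le_abs_self μ₀, hbpS.1]) ht.le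
    have e2 : t * t ≤ t := by nlinarith
    have hgp : sSup ((fun P => ∫ ω, (X ω - μ₀) ^ 2 ∂P) '' S) - t * (2 * s + 2 * |μ₀| + 4) ≤
        ap - 2 * μ₀ * bp + μ₀ ^ 2 := by linarith [hyp, e1, e2, ht.le]
    have hB : sSup ((fun P => ∫ ω, (X ω - μ₀) ^ 2 ∂P) '' S) - t ^ 2 <
        sSup ((fun P => ∫ ω, (X ω - (μ₀ - t)) ^ 2 ∂P) '' S) :=
      lt_of_lt_of_le (by linarith [pow_pos ht 2]) (hminAll (μ₀ - t))
    obtain ⟨ym, ⟨Pm, hPm, rfl⟩, hym⟩ := exists_lt_of_lt_csSup (hne (μ₀ - t)) hB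
    simp only at hym
    rw [hexp Pm hPm (μ₀ - t)] at hym
    have hgPm := hle_sSup μ₀ Pm hPm
    rw [hexp Pm hPm μ₀] at hgPm
    have hbmS := abs_le.1 (hb Pm hPm)
    set am : ℝ := ∫ ω, X ω ^ 2 ∂Pm with ham
    set bm : ℝ := ∫ ω, X ω ∂Pm with hbm
    have hbmgt : μ₀ - t < bm := by
      have hpos : 0 < t * (bm - μ₀ + t) := by nlinarith [hym, hgPm]
      by_contra hcon
      push_neg at hcon
      nlinarith [hpos, ht]
    have e0' : am - 2 * (μ₀ - t) * bm + (μ₀ - t) ^ 2 =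
        (am - 2 * μ₀ * bm + μ₀ ^ 2) + 2 * (t * (bm - μ₀)) + t * t := by ring
    rw [e0'] at hym
    have e1' : t * (bm - μ₀) ≤ t * (|μ₀| + s) :=
      mul_le_mul_of_nonneg_left (by linarith [le_abs_self μ₀, neg_abs_le μ₀, hbmS.2]) ht.le
    have hgm : sSup ((fun P => ∫ ω, (X ω - μ₀) ^ 2 ∂P) '' S) - t * (2 * s + 2 * |μ₀| + 4) ≤
        am - 2 * μ₀ * bm + μ₀ ^ 2 := by linarith [hym, e1', e2, ht.le]
    by_cases hc1 : μ₀ - t ≤ bp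
    · have hsq : (bp - μ₀) ^ 2 ≤ t ^ 2 := sq_le_sq' (by linarith) (by linarith)
      have hmemV : varP Pp X ≤ sSup ((fun P => varP P X) '' convHullP S) :=
        le_csSup hVbdd ⟨Pp, hSsub Pp hPp, rfl⟩
      have hvd : varP Pp X = ap - bp ^ 2 := rfl
      rw [hvd] at hmemV
      have idd : ap - bp ^ 2 = (ap - 2 * μ₀ * bp + μ₀ ^ 2) - (bp - μ₀) ^ 2 := by ring
      rw [idd] at hmemV
      linarith [hmemV, hgp, hsq, e2, ht.le]
    · by_cases hc2 : bm ≤ μ₀ + t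
      · have hsq : (bm - μ₀) ^ 2 ≤ t ^ 2 := sq_le_sq' (by linarith) (by linarith)
        have hmemV : varP Pm X ≤ sSup ((fun P => varP P X) '' convHullP S) :=
          le_csSup hVbdd ⟨Pm, hSsub Pm hPm, rfl⟩
        have hvd : varP Pm X = am - bm ^ 2 := rfl
        rw [hvd] at hmemV
        have idd : am - bm ^ 2 = (am - 2 * μ₀ * bm + μ₀ ^ 2) - (bm - μ₀) ^ 2 := by ring
        rw [idd] at hmemV
        linarith [hmemV, hgm, hsq, e2, ht.le]
      · push_neg at hc1 hc2
        have hden : 0 < bm - bp := by linarith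
        set lam : ℝ := (bm - μ₀) / (bm - bp) with hlam
        have hlam0 : 0 ≤ lam := div_nonneg (by linarith) hden.le
        have hlam1 : lam ≤ 1 := by
          rw [hlam, div_le_one hden]; linarith
        have hlam1' : 0 ≤ 1 - lam := by linarith
        have hcomb : lam * bp + (1 - lam) * bm = μ₀ := by
          rw [hlam]; field_simp; ring
        set w2 : Fin 2 → ℝ≥0∞ := ![ENNReal.ofReal lam, ENNReal.ofReal (1 - lam)] with hw2
        set Pv : Fin 2 → Measure Ω := ![Pp, Pm] with hPv2
        have hofadd : ENNReal.ofReal lam + ENNReal.ofReal (1 - lam) = 1 := by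
          rw [← ENNReal.ofReal_add hlam0 hlam1']
          norm_num
        have hwsum : ∑ i, w2 i = 1 := by
          rw [Fin.sum_univ_two]
          simp only [hw2, Matrix.cons_val_zero, Matrix.cons_val_one, Matrix.head_cons]
          exact hofadd
        have hPvS : ∀ i, Pv i ∈ S := by
          intro i
          fin_cases i
          · simpa [hPv2] using hPp
          · simpa [hPv2] using hPm
        set Q : Measure Ω := ∑ i, w2 i • Pv i with hQdef
        have hQhull : Q ∈ convHullP S := ⟨2, w2, Pv, hwsum, hPvS, hQdef⟩
        have haQ := integral_convex_comb w2 Pv hwsum (fun ω => X ω ^ 2)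
          fun i => hInt2 _ (hPvS i)
        have hbQ := integral_convex_comb w2 Pv hwsum X fun i => hInt1 _ (hPvS i)
        have haQ' : ∫ ω, X ω ^ 2 ∂Q = lam * ap + (1 - lam) * am := by
          rw [hQdef, haQ, Fin.sum_univ_two]
          simp only [hw2, hPv2, Matrix.cons_val_zero, Matrix.cons_val_one, Matrix.head_cons,
            ENNReal.toReal_ofReal hlam0, ENNReal.toReal_ofReal hlam1']
          rfl
        have hbQ' : ∫ ω, X ω ∂Q = lam * bp + (1 - lam) * bm := by
          rw [hQdef, hbQ, Fin.sum_univ_two]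
          simp only [hw2, hPv2, Matrix.cons_val_zero, Matrix.cons_val_one, Matrix.head_cons,
            ENNReal.toReal_ofReal hlam0, ENNReal.toReal_ofReal hlam1']
          rfl
        have hvarQ : varP Q X = lam * ap + (1 - lam) * am - μ₀ ^ 2 := by
          show (∫ ω, X ω ^ 2 ∂Q) - (∫ ω, X ω ∂Q) ^ 2 = _
          rw [haQ', hbQ', hcomb]
        have hVQ : varP Q X ≤ sSup ((fun P => varP P X) '' convHullP S) :=
          le_csSup hVbdd ⟨Q, hQhull, rfl⟩
        have ec₁ : lam * (sSup ((fun P => ∫ ω, (X ω - μ₀) ^ 2 ∂P) '' S) -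
            t * (2 * s + 2 * |μ₀| + 4)) ≤ lam * (ap - 2 * μ₀ * bp + μ₀ ^ 2) :=
          mul_le_mul_of_nonneg_left hgp hlam0
        have ec₂ : (1 - lam) * (sSup ((fun P => ∫ ω, (X ω - μ₀) ^ 2 ∂P) '' S) -
            t * (2 * s + 2 * |μ₀| + 4)) ≤ (1 - lam) * (am - 2 * μ₀ * bm + μ₀ ^ 2) :=
          mul_le_mul_of_nonneg_left hgm hlam1'
        have eq1 : lam * (ap - 2 * μ₀ * bp + μ₀ ^ 2) + (1 - lam) * (am - 2 * μ₀ * bm + μ₀ ^ 2)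
            = (lam * ap + (1 - lam) * am) - 2 * μ₀ * (lam * bp + (1 - lam) * bm) + μ₀ ^ 2 := by
          ring
        rw [hcomb] at eq1
        have hgboth : sSup ((fun P => ∫ ω, (X ω - μ₀) ^ 2 ∂P) '' S) -
            t * (2 * s + 2 * |μ₀| + 4) ≤
            lam * (ap - 2 * μ₀ * bp + μ₀ ^ 2) + (1 - lam) * (am - 2 * μ₀ * bm + μ₀ ^ 2) := by
          linarith [ec₁, ec₂]
        linarith [hVQ, hvarQ.ge, hvarQ.le, eq1.ge, eq1.le, hgboth, ht.le]
  have hkey : sSup ((fun P => ∫ ω, (X ω - μ₀) ^ 2 ∂P) '' S) ≤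
      sSup ((fun P => varP P X) '' convHullP S) := by
    apply _root_.le_of_forall_pos_le_add
    intro ε hε
    have hD0 : 0 < 2 * s + 2 * |μ₀| + 5 := by positivity
    set t : ℝ := min 1 (ε / (2 * s + 2 * |μ₀| + 5)) with htdef
    have ht0 : 0 < t := lt_min one_pos (div_pos hε hD0)
    have ht1 : t ≤ 1 := min_le_left _ _
    have htD : t * (2 * s + 2 * |μ₀| + 5) ≤ ε := by
      have h' : t ≤ ε / (2 * s + 2 * |μ₀| + 5) := min_le_right _ _
      calc t * (2 * s + 2 * |μ₀| + 5)
          ≤ (ε / (2 * s + 2 * |μ₀| + 5)) * (2 * s + 2 * |μ₀| + 5) :=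
            mul_le_mul_of_nonneg_right h' hD0.le
        _ = ε := div_mul_cancel₀ ε hD0.ne'
    have := hstep t ht0 ht1
    linarith
  constructor
  · apply le_antisymm
    · refine le_trans (ciInf_le ⟨0, ?_⟩ μ₀) hkey
      rintro y ⟨μ, rfl⟩
      exact hf0 μ
    · exact le_ciInf hV_le_f
  · exact ⟨μ₀, le_antisymm hkey (hV_le_f μ₀)⟩
end

section
/- Let 𝒫 be a nonempty set of probability measures and X a random variable with uniformly bounded second moments over 𝒫. Then the lower variance V(X) := min over μ ∈ ℝ of (inf_{P∈𝒫} E_P[(X-μ)²]) equals inf_{P∈𝒫} Var_P(X), and this infimum over 𝒫 coincides with the infimum over the convex hull of 𝒫. -/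
open MeasureTheory ENNReal

variable {Ω : Type*} [MeasurableSpace Ω]

lemma varP_nonneg' {P : Measure Ω} [IsProbabilityMeasure P] {X : Ω → ℝ}
    (hX : MemLp X 2 P) : 0 ≤ varP P X := by
  have h := ProbabilityTheory.variance_nonneg X P
  rw [ProbabilityTheory.variance_eq_sub hX] at h
  simpa [varP] using h

lemma key_ident {P : Measure Ω} [IsProbabilityMeasure P] {X : Ω → ℝ}
    (hX : MemLp X 2 P) (μ : ℝ) :
    ∫ ω, (X ω - μ) ^ 2 ∂P = varP P X + (∫ ω, X ω ∂P - μ) ^ 2 := by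
  have h2 : Integrable (fun ω => X ω ^ 2) P := hX.integrable_sq
  have h1 : Integrable X P := hX.integrable one_le_two
  have he : (fun ω => (X ω - μ) ^ 2)
      = fun ω => (X ω ^ 2 - (2 * μ) * X ω) + μ ^ 2 := by funext ω; ring
  rw [show (∫ ω, (X ω - μ) ^ 2 ∂P)
      = ∫ ω, ((X ω ^ 2 - (2 * μ) * X ω) + μ ^ 2) ∂P from by rw [← he],
    integral_add (show Integrable (fun ω => X ω ^ 2 - (2 * μ) * X ω) P from
      h2.sub (h1.const_mul _)) (integrable_const _),
    integral_sub h2 (h1.const_mul _), integral_const_mul, integral_const]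
  simp only [measure_univ, probReal_univ, ENNReal.toReal_one, smul_eq_mul, one_mul, varP]
  ring

theorem stmt3 (S : Set (Measure Ω)) (hS : S.Nonempty)
    (hprob : ∀ P ∈ S, IsProbabilityMeasure P) (X : Ω → ℝ)
    (hX : ∀ P ∈ S, MemLp X 2 P)
    (hbdd : BddAbove ((fun P => ∫ ω, (X ω) ^ 2 ∂P) '' S)) :
    (⨅ μ : ℝ, sInf ((fun P => ∫ ω, (X ω - μ) ^ 2 ∂P) '' S)) =
      sInf ((fun P => varP P X) '' S) ∧
    (∃ μ₀ : ℝ, sInf ((fun P => ∫ ω, (X ω - μ₀) ^ 2 ∂P) '' S) =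
      sInf ((fun P => varP P X) '' S)) ∧
    sInf ((fun P => varP P X) '' S) = sInf ((fun P => varP P X) '' convHullP S) := by
  classical
  have hV0 : ∀ b ∈ (fun P => varP P X) '' S, 0 ≤ b := by
    rintro _ ⟨P, hP, rfl⟩
    haveI := hprob P hP
    exact varP_nonneg' (hX P hP)
  have hVne : ((fun P => varP P X) '' S).Nonempty := hS.image _
  have hVbdd : BddBelow ((fun P => varP P X) '' S) := ⟨0, hV0⟩
  set v := sInf ((fun P => varP P X) '' S) with hv
  have hvle : ∀ P ∈ S, v ≤ varP P X := fun P hP => csInf_le hVbdd ⟨P, hP, rfl⟩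
  have key : ∀ P ∈ S, ∀ μ : ℝ,
      ∫ ω, (X ω - μ) ^ 2 ∂P = varP P X + (∫ ω, X ω ∂P - μ) ^ 2 := by
    intro P hP μ
    haveI := hprob P hP
    exact key_ident (hX P hP) μ
  have hgbdd : ∀ μ : ℝ, BddBelow ((fun P => ∫ ω, (X ω - μ) ^ 2 ∂P) '' S) := by
    intro μ
    refine ⟨0, ?_⟩
    rintro _ ⟨P, hP, rfl⟩
    exact integral_nonneg fun ω => sq_nonneg _
  have hglow : ∀ μ : ℝ, v ≤ sInf ((fun P => ∫ ω, (X ω - μ) ^ 2 ∂P) '' S) := by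
    intro μ
    refine le_csInf (hS.image _) ?_
    rintro _ ⟨P, hP, rfl⟩
    have h := hvle P hP
    dsimp only
    rw [key P hP μ]
    nlinarith [sq_nonneg ((∫ ω, X ω ∂P) - μ)]
  obtain ⟨C, hC⟩ := hbdd
  have hC' : ∀ P ∈ S, ∫ ω, (X ω) ^ 2 ∂P ≤ C := fun P hP => hC ⟨P, hP, rfl⟩
  have hm : ∀ P ∈ S, |∫ ω, X ω ∂P| ≤ Real.sqrt C := by
    intro P hP
    haveI := hprob P hP
    have h0 : 0 ≤ varP P X := varP_nonneg' (hX P hP)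
    have h1 : (∫ ω, X ω ∂P) ^ 2 ≤ C := by
      have := hC' P hP
      simp only [varP] at h0
      linarith
    calc |∫ ω, X ω ∂P| = Real.sqrt ((∫ ω, X ω ∂P) ^ 2) := (Real.sqrt_sq_eq_abs _).symm
      _ ≤ Real.sqrt C := Real.sqrt_le_sqrt h1
  have hseq : ∀ n : ℕ, ∃ P, P ∈ S ∧ varP P X < v + 1 / (n + 1) := by
    intro n
    have hpos : (0:ℝ) < 1 / ((n:ℝ) + 1) := by positivity
    obtain ⟨b, hb, hlt⟩ := exists_lt_of_csInf_lt hVne (lt_add_of_pos_right v hpos)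
    obtain ⟨P, hP, rfl⟩ := hb
    exact ⟨P, hP, hlt⟩
  choose P hPS hPv using hseq
  set m : ℕ → ℝ := fun n => ∫ ω, X ω ∂(P n) with hmdef
  have hmIcc : ∀ n, m n ∈ Set.Icc (-Real.sqrt C) (Real.sqrt C) := by
    intro n
    have := abs_le.mp (hm _ (hPS n))
    exact ⟨this.1, this.2⟩
  obtain ⟨μ₀, _, φ, hφ, hlim⟩ := (isCompact_Icc).tendsto_subseq hmIcc
  have hg0 : sInf ((fun P => ∫ ω, (X ω - μ₀) ^ 2 ∂P) '' S) = v := by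
    refine le_antisymm ?_ (hglow μ₀)
    refine le_of_forall_pos_le_add fun ε hε => ?_
    have h1 : Filter.Tendsto (fun n => (m (φ n) - μ₀) ^ 2) Filter.atTop (nhds 0) := by
      have := ((hlim.sub_const μ₀).pow 2)
      simpa using this
    obtain ⟨N, hN⟩ := exists_nat_one_div_lt (show (0:ℝ) < ε / 2 by linarith)
    have h2 : ∀ᶠ n in Filter.atTop, (m (φ n) - μ₀) ^ 2 < ε / 2 :=
      h1.eventually_lt_const (by linarith)
    obtain ⟨n, hn1, hn2⟩ := (h2.and (Filter.eventually_ge_atTop N)).exists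
    have hφn : (N : ℝ) ≤ (φ n : ℝ) := by
      exact_mod_cast le_trans hn2 hφ.le_apply
    have hstep : 1 / ((φ n : ℝ) + 1) ≤ 1 / ((N : ℝ) + 1) :=
      one_div_le_one_div_of_le (by positivity) (by linarith)
    calc sInf ((fun P => ∫ ω, (X ω - μ₀) ^ 2 ∂P) '' S)
        ≤ ∫ ω, (X ω - μ₀) ^ 2 ∂(P (φ n)) := csInf_le (hgbdd μ₀) ⟨P (φ n), hPS _, rfl⟩
      _ = varP (P (φ n)) X + (m (φ n) - μ₀) ^ 2 := key _ (hPS _) μ₀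
      _ ≤ v + ε := by
          have := hPv (φ n)
          linarith
  refine ⟨?_, ⟨μ₀, hg0⟩, ?_⟩
  · refine le_antisymm ?_ (le_ciInf hglow)
    have : BddBelow (Set.range fun μ : ℝ => sInf ((fun P => ∫ ω, (X ω - μ) ^ 2 ∂P) '' S)) := by
      refine ⟨v, ?_⟩
      rintro _ ⟨μ, rfl⟩
      exact hglow μ
    exact hg0 ▸ ciInf_le this μ₀
  · have hsub : S ⊆ convHullP S := by
      intro Q hQ
      exact ⟨1, fun _ => 1, fun _ => Q, by simp, fun _ => hQ, by simp⟩
    have hTbound : ∀ Q ∈ convHullP S, v ≤ varP Q X := by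
      rintro _ ⟨n, w, Pf, hw, hPf, rfl⟩
      have hwt : ∀ i, w i ≠ ⊤ := fun i =>
        ne_top_of_le_ne_top one_ne_top
          (hw ▸ Finset.single_le_sum (f := w) (fun _ _ => zero_le) (Finset.mem_univ i))
      set a : Fin n → ℝ := fun i => (w i).toReal with ha
      have ha0 : ∀ i, 0 ≤ a i := fun i => ENNReal.toReal_nonneg
      have hsum : ∑ i, a i = 1 := by
        have h := ENNReal.toReal_sum (s := Finset.univ) (f := w) fun i _ => hwt i
        rw [hw] at h
        simpa using h.symm
      have hint1 : ∀ i ∈ Finset.univ, Integrable X ((fun i => w i • Pf i) i) := by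
        intro i _
        haveI := hprob _ (hPf i)
        exact ((hX _ (hPf i)).integrable one_le_two).smul_measure (hwt i)
      have hint2 : ∀ i ∈ Finset.univ,
          Integrable (fun ω => X ω ^ 2) ((fun i => w i • Pf i) i) := by
        intro i _
        haveI := hprob _ (hPf i)
        exact (hX _ (hPf i)).integrable_sq.smul_measure (hwt i)
      set mi : Fin n → ℝ := fun i => ∫ ω, X ω ∂(Pf i) with hmi
      set si : Fin n → ℝ := fun i => ∫ ω, (X ω) ^ 2 ∂(Pf i) with hsi
      have hIX : ∫ ω, X ω ∂(∑ i, w i • Pf i) = ∑ i, a i * mi i := by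
        rw [integral_finset_sum_measure hint1]
        simp only [integral_smul_measure, smul_eq_mul]
        rfl
      have hIX2 : ∫ ω, (X ω) ^ 2 ∂(∑ i, w i • Pf i) = ∑ i, a i * si i := by
        rw [integral_finset_sum_measure hint2]
        simp only [integral_smul_measure, smul_eq_mul]
        rfl
      have hCS : (∑ i, a i * mi i) ^ 2 ≤ ∑ i, a i * (mi i) ^ 2 := by
        have h := Finset.sum_mul_sq_le_sq_mul_sq Finset.univ
          (fun i => Real.sqrt (a i)) (fun i => Real.sqrt (a i) * mi i)
        have e1 : ∀ i ∈ Finset.univ,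
            Real.sqrt (a i) * (Real.sqrt (a i) * mi i) = a i * mi i := by
          intro i _
          rw [← mul_assoc, Real.mul_self_sqrt (ha0 i)]
        have e2 : ∀ i ∈ Finset.univ, Real.sqrt (a i) ^ 2 = a i := fun i _ =>
          Real.sq_sqrt (ha0 i)
        have e3 : ∀ i ∈ Finset.univ,
            (Real.sqrt (a i) * mi i) ^ 2 = a i * mi i ^ 2 := by
          intro i _
          rw [mul_pow, Real.sq_sqrt (ha0 i)]
        rw [Finset.sum_congr rfl e1, Finset.sum_congr rfl e2, Finset.sum_congr rfl e3,
          hsum, one_mul] at h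
        exact h
      have hvar : ∀ i, v ≤ si i - mi i ^ 2 := fun i => hvle _ (hPf i)
      have hfinal : ∑ i, a i * v ≤ ∑ i, a i * (si i - mi i ^ 2) :=
        Finset.sum_le_sum fun i _ => mul_le_mul_of_nonneg_left (hvar i) (ha0 i)
      have hsv : ∑ i, a i * v = v := by rw [← Finset.sum_mul, hsum, one_mul]
      have hdist : ∑ i, a i * (si i - mi i ^ 2)
          = ∑ i, a i * si i - ∑ i, a i * mi i ^ 2 := by
        rw [← Finset.sum_sub_distrib]
        exact Finset.sum_congr rfl fun i _ => by ring
      simp only [varP]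
      rw [hIX, hIX2]
      rw [hsv, hdist] at hfinal
      linarith
    have hTne : ((fun P => varP P X) '' convHullP S).Nonempty :=
      (hS.mono hsub).image _
    refine le_antisymm ?_ ?_
    · refine le_csInf hTne ?_
      rintro _ ⟨Q, hQ, rfl⟩
      exact hTbound Q hQ
    · refine csInf_le_csInf ?_ hVne (Set.image_mono hsub)
      refine ⟨v, ?_⟩
      rintro _ ⟨Q, hQ, rfl⟩
      exact hTbound Q hQ
end

section
/- Let 𝒫 be a nonempty set of probability measures and X, Y random variables with uniformly bounded second moments over 𝒫. Define M_X = [inf_P E_P[X], sup_P E_P[X]] and M_Y similarly, and Ē[Z] = sup_{P∈𝒫} E_P[Z]. Then the upper covariance C̄(X,Y) := max over μ₂ ∈ M_Y of min over μ₁ ∈ M_X of Ē[(X-μ₁)(Y-μ₂)] equals sup over P in the convex hull of 𝒫 of Cov_P(X,Y). -/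
open MeasureTheory ENNReal

variable {Ω : Type*} [MeasurableSpace Ω]

set_option maxHeartbeats 1000000 in
lemma core_minimax {m M L R c : ℝ} (hmM : m ≤ M) (hL : 0 ≤ L)
    {A S : Set (ℝ × ℝ × ℝ)} (hSA : S ⊆ A)
    (hA : ∀ x ∈ A, x.2.2 ∈ Set.Icc m M ∧ |x.2.1| ≤ L ∧ x.1 - x.2.2 * x.2.1 ≤ R)
    (hmix : ∀ x ∈ S, ∀ y ∈ S, ∀ t ∈ Set.Icc (0:ℝ) 1,
      (t * x.1 + (1-t) * y.1, t * x.2.1 + (1-t) * y.2.1, t * x.2.2 + (1-t) * y.2.2) ∈ A)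
    (hlo : ∀ p ∈ Set.Icc m M, ∀ ε > 0, ∃ x ∈ S, c - ε ≤ x.1 - p * x.2.1)
    (hhi : ∀ ε > 0, ∃ μ ∈ Set.Icc m M, ∀ x ∈ A, x.1 - μ * x.2.1 ≤ c + ε) :
    c ≤ R := by
  refine le_of_forall_pos_le_add fun η hη => ?_
  have hd : (0:ℝ) ≤ M - m := by linarith
  set d := M - m with hd_def
  have hδpos : 0 < η / (8*(L+1)) := by positivity
  set δ := η / (8*(L+1)) with hδ_def
  have hδη : δ * (8*(L+1)) = η := div_mul_cancel₀ _ (by positivity)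
  have hεpos : 0 < η * δ / (2*(δ + 2*d)) := by positivity
  set ε := η * δ / (2*(δ + 2*d)) with hε_def
  have hεeq : ε * (2*(δ + 2*d)) = η * δ := div_mul_cancel₀ _ (by positivity)
  have hεd : ε * (2*d) ≤ η * δ / 2 := by nlinarith
  have hεη : ε ≤ η / 2 := by nlinarith
  have hδL : 2 * (δ * L) ≤ η / 4 := by nlinarith
  obtain ⟨μ, ⟨hμm, hμM⟩, hhiμ⟩ := hhi ε hεpos
  by_cases hcase : d ≤ 2 * δ
  · -- small interval: probe at μ itself
    obtain ⟨⟨a, b, e⟩, hxS, hx⟩ := hlo μ ⟨hμm, hμM⟩ ε hεpos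
    obtain ⟨⟨hem, heM⟩, hB, hxR⟩ := hA _ (hSA hxS)
    simp only at hx hem heM hB hxR
    have habs : (e - μ) * b ≤ 2*δ*L := by
      calc (e - μ) * b ≤ |(e - μ) * b| := le_abs_self _
        _ = |e - μ| * |b| := abs_mul _ _
        _ ≤ (2*δ) * L := by
            apply mul_le_mul _ hB (abs_nonneg _) (by linarith)
            rw [abs_le]; constructor <;> linarith
        _ = 2*δ*L := by ring
    nlinarith
  · push_neg at hcase
    by_cases hRav : μ + δ ≤ M
    · -- right probe available
      obtain ⟨⟨a, b, e⟩, hxS, hx⟩ := hlo (μ + δ) ⟨by linarith, hRav⟩ ε hεpos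
      obtain ⟨⟨hem, heM⟩, hB, hxR⟩ := hA _ (hSA hxS)
      simp only at hx hem heM hB hxR
      have hslope : δ * b ≤ 2 * ε := by
        have h := hhiμ _ (hSA hxS); simp only at h; nlinarith
      by_cases hBpos : 0 ≤ b
      · have h1 : c - ε ≤ R + d * b := by
          nlinarith [mul_nonneg (by linarith : (0:ℝ) ≤ d - (e - μ - δ)) hBpos]
        by_contra hcon
        push_neg at hcon
        nlinarith [mul_pos hδpos (by linarith : (0:ℝ) < c - (R + η)),
          mul_le_mul_of_nonneg_left hslope hd]
      · push_neg at hBpos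
        by_cases hLav : m ≤ μ - δ
        · -- left probe available
          obtain ⟨⟨a', b', e'⟩, hyS, hy⟩ := hlo (μ - δ) ⟨hLav, by linarith⟩ ε hεpos
          obtain ⟨⟨hem', heM'⟩, hB', hyR⟩ := hA _ (hSA hyS)
          simp only at hy hem' heM' hB' hyR
          have hslope' : -(2*ε) ≤ δ * b' := by
            have h := hhiμ _ (hSA hyS); simp only at h; nlinarith
          by_cases hBneg : b' ≤ 0
          · have h1 : c - ε ≤ R + d * (-b') := by
              nlinarith [mul_nonneg (by linarith : (0:ℝ) ≤ e' - μ + δ + d)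
                (by linarith : (0:ℝ) ≤ -b')]
            by_contra hcon
            push_neg at hcon
            nlinarith [mul_pos hδpos (by linarith : (0:ℝ) < c - (R + η)),
              mul_le_mul_of_nonneg_left (by linarith : δ * (-b') ≤ 2*ε) hd]
          · -- mix: b < 0 < b'
            push_neg at hBneg
            set t := b' / (b' - b) with ht_def
            have hden : 0 < b' - b := by linarith
            have ht0 : 0 ≤ t := by positivity
            have ht1 : t ≤ 1 := by
              rw [ht_def, div_le_one hden]; linarith
            have htB : t * b + (1-t) * b' = 0 := by
              rw [ht_def]; linear_combination -(div_mul_cancel₀ b' hden.ne')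
            obtain ⟨-, -, hzR⟩ := hA _ (hmix _ hxS _ hyS t ⟨ht0, ht1⟩)
            simp only [htB, mul_zero, sub_zero] at hzR
            have hLb : -L ≤ b := (abs_le.mp hB).1
            have hLb' : b' ≤ L := (abs_le.mp hB').2
            have hx2 : c - ε - δ*L ≤ a - μ * b := by nlinarith
            have hy2 : c - ε - δ*L ≤ a' - μ * b' := by nlinarith
            have hcomb : c - ε - δ*L ≤ (t*a + (1-t)*a') - μ * (t * b + (1-t) * b') := by
              nlinarith [mul_le_mul_of_nonneg_left hx2 ht0,
                mul_le_mul_of_nonneg_left hy2 (by linarith : (0:ℝ) ≤ 1 - t)]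
            rw [htB, mul_zero, sub_zero] at hcomb
            nlinarith
        · -- left unavailable: μ - δ < m, b < 0
          push_neg at hLav
          have hLb : -L ≤ b := (abs_le.mp hB).1
          have h1 : (μ + δ - e) * b ≥ 2*δ*b := by
            nlinarith [mul_nonneg (by linarith : (0:ℝ) ≤ 2*δ - (μ + δ - e))
              (by linarith : (0:ℝ) ≤ -b)]
          nlinarith
    · -- right unavailable; left must be available
      push_neg at hRav
      have hLav : m ≤ μ - δ := by linarith
      obtain ⟨⟨a', b', e'⟩, hyS, hy⟩ := hlo (μ - δ) ⟨hLav, by linarith⟩ ε hεpos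
      obtain ⟨⟨hem', heM'⟩, hB', hyR⟩ := hA _ (hSA hyS)
      simp only at hy hem' heM' hB' hyR
      have hslope' : -(2*ε) ≤ δ * b' := by
        have h := hhiμ _ (hSA hyS); simp only at h; nlinarith
      by_cases hBneg : b' ≤ 0
      · have h1 : c - ε ≤ R + d * (-b') := by
          nlinarith [mul_nonneg (by linarith : (0:ℝ) ≤ e' - μ + δ + d)
            (by linarith : (0:ℝ) ≤ -b')]
        by_contra hcon
        push_neg at hcon
        nlinarith [mul_pos hδpos (by linarith : (0:ℝ) < c - (R + η)),
          mul_le_mul_of_nonneg_left (by linarith : δ * (-b') ≤ 2*ε) hd]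
      · push_neg at hBneg
        have hLb' : b' ≤ L := (abs_le.mp hB').2
        have h1 : (e' - μ + δ) * b' ≤ 2*δ*b' := by
          nlinarith [mul_nonneg (by linarith : (0:ℝ) ≤ 2*δ - (e' - μ + δ))
            (by linarith : (0:ℝ) ≤ b')]
        nlinarith

lemma my_int_mul {P : Measure Ω} {X Y : Ω → ℝ} (hX : MemLp X 2 P) (hY : MemLp Y 2 P) :
    Integrable (fun ω => X ω * Y ω) P := by
  refine Integrable.mono' (hX.integrable_sq.add hY.integrable_sq)
    (hX.aestronglyMeasurable.mul hY.aestronglyMeasurable) ?_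
  filter_upwards with ω
  have h : |X ω| * |Y ω| ≤ X ω ^ 2 + Y ω ^ 2 := by
    nlinarith [sq_nonneg (|X ω| - |Y ω|), sq_abs (X ω), sq_abs (Y ω), abs_nonneg (X ω),
      abs_nonneg (Y ω)]
  simpa [Real.norm_eq_abs, abs_mul] using h

lemma my_F_exp {P : Measure Ω} (hP : IsProbabilityMeasure P) {X Y : Ω → ℝ}
    (hX : MemLp X 2 P) (hY : MemLp Y 2 P) (μ₁ μ₂ : ℝ) :
    ∫ ω, (X ω - μ₁) * (Y ω - μ₂) ∂P
      = (∫ ω, X ω * Y ω ∂P) - μ₁ * (∫ ω, Y ω ∂P) - μ₂ * (∫ ω, X ω ∂P) + μ₁ * μ₂ := by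
  haveI := hP
  have iX : Integrable X P := hX.integrable one_le_two
  have iY : Integrable Y P := hY.integrable one_le_two
  have iXY : Integrable (fun ω => X ω * Y ω) P := my_int_mul hX hY
  have h : (fun ω => (X ω - μ₁) * (Y ω - μ₂))
      = fun ω => (X ω * Y ω - μ₁ * Y ω) - (μ₂ * X ω - μ₁ * μ₂) := funext fun ω => by ring
  have i1 : Integrable (fun ω => X ω * Y ω - μ₁ * Y ω) P := iXY.sub (iY.const_mul μ₁)
  have i2 : Integrable (fun ω => μ₂ * X ω - μ₁ * μ₂) P :=
    (iX.const_mul μ₂).sub (integrable_const _)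
  rw [h, integral_sub i1 i2, integral_sub iXY (iY.const_mul μ₁),
      integral_sub (iX.const_mul μ₂) (integrable_const _),
      integral_const_mul, integral_const_mul, integral_const]
  simp [measure_univ]
  ring

lemma my_abs_int {P : Measure Ω} {f g : Ω → ℝ}
    (hf : Integrable f P) (hg : Integrable g P) (h : ∀ ω, |f ω| ≤ g ω) :
    |∫ ω, f ω ∂P| ≤ ∫ ω, g ω ∂P := by
  calc |∫ ω, f ω ∂P| = ‖∫ ω, f ω ∂P‖ := (Real.norm_eq_abs _).symm
    _ ≤ ∫ ω, ‖f ω‖ ∂P := norm_integral_le_integral_norm f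
    _ = ∫ ω, |f ω| ∂P := by simp [Real.norm_eq_abs]
    _ ≤ ∫ ω, g ω ∂P := integral_mono hf.abs hg h

lemma my_absE_le {P : Measure Ω} (hP : IsProbabilityMeasure P) {f : Ω → ℝ} (hf : MemLp f 2 P)
    {D : ℝ} (hD : ∫ ω, (f ω)^2 ∂P ≤ D) : |∫ ω, f ω ∂P| ≤ (1 + D)/2 := by
  haveI := hP
  have h := my_abs_int (hf.integrable one_le_two)
    (g := fun ω => (1 + (f ω)^2)/2)
    (((integrable_const (1:ℝ)).add hf.integrable_sq).div_const 2)
    (fun ω => by nlinarith [sq_nonneg (|f ω| - 1), sq_abs (f ω), abs_nonneg (f ω)])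
  have h2 : ∫ ω, (1 + (f ω)^2)/2 ∂P = (1 + ∫ ω, (f ω)^2 ∂P)/2 := by
    rw [integral_div, integral_add (integrable_const 1) hf.integrable_sq, integral_const]
    simp [measure_univ]
  rw [h2] at h
  linarith

lemma my_absEXY_le {P : Measure Ω} (hP : IsProbabilityMeasure P) {X Y : Ω → ℝ}
    (hX : MemLp X 2 P) (hY : MemLp Y 2 P)
    {D : ℝ} (hD : (∫ ω, (X ω)^2 ∂P) + ∫ ω, (Y ω)^2 ∂P ≤ D) :
    |∫ ω, X ω * Y ω ∂P| ≤ D/2 := by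
  haveI := hP
  have h := my_abs_int (my_int_mul hX hY)
    (g := fun ω => ((X ω)^2 + (Y ω)^2)/2)
    ((hX.integrable_sq.add hY.integrable_sq).div_const 2)
    (fun ω => by
      rw [abs_mul]
      nlinarith [sq_nonneg (|X ω| - |Y ω|), sq_abs (X ω), sq_abs (Y ω), abs_nonneg (X ω),
        abs_nonneg (Y ω)])
  have h2 : ∫ ω, ((X ω)^2 + (Y ω)^2)/2 ∂P
      = ((∫ ω, (X ω)^2 ∂P) + ∫ ω, (Y ω)^2 ∂P)/2 := by
    rw [integral_div, integral_add hX.integrable_sq hY.integrable_sq]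
  rw [h2] at h
  linarith

lemma my_sum_int {n : ℕ} (w : Fin n → ℝ≥0∞) (P : Fin n → Measure Ω) (hw : ∑ i, w i = 1)
    {f : Ω → ℝ} (hint : ∀ i, Integrable f (P i)) :
    Integrable f (∑ i, w i • P i) ∧
      ∫ ω, f ω ∂(∑ i, w i • P i) = ∑ i, (w i).toReal * ∫ ω, f ω ∂(P i) := by
  have hwt : ∀ i, w i ≠ ∞ := by
    intro i
    have h1 : w i ≤ 1 := hw ▸ Finset.single_le_sum (f := w) (fun j _ => zero_le)
      (Finset.mem_univ i)
    exact ne_top_of_le_ne_top one_ne_top h1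
  have h1 : ∀ i ∈ Finset.univ, Integrable f ((w i) • P i) :=
    fun i _ => (hint i).smul_measure (hwt i)
  refine ⟨integrable_finset_sum_measure.mpr h1, ?_⟩
  rw [integral_finset_sum_measure h1]
  exact Finset.sum_congr rfl fun i _ => by rw [integral_smul_measure]; simp [smul_eq_mul]

lemma my_wt_sum {n : ℕ} (w : Fin n → ℝ≥0∞) (hw : ∑ i, w i = 1) :
    ∑ i, (w i).toReal = 1 := by
  have hwt : ∀ i ∈ Finset.univ, w i ≠ ∞ := by
    intro i _
    have h1 : w i ≤ 1 := hw ▸ Finset.single_le_sum (f := w) (fun j _ => zero_le)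
      (Finset.mem_univ i)
    exact ne_top_of_le_ne_top one_ne_top h1
  rw [← ENNReal.toReal_sum hwt, hw, ENNReal.toReal_one]

lemma my_conv_le {n : ℕ} {c v : Fin n → ℝ} (h0 : ∀ i, 0 ≤ c i) (h1 : ∑ i, c i = 1)
    {B : ℝ} (hv : ∀ i, v i ≤ B) : ∑ i, c i * v i ≤ B := by
  calc ∑ i, c i * v i ≤ ∑ i, c i * B :=
        Finset.sum_le_sum fun i _ => mul_le_mul_of_nonneg_left (hv i) (h0 i)
    _ = B := by rw [← Finset.sum_mul, h1, one_mul]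

lemma my_conv_ge {n : ℕ} {c v : Fin n → ℝ} (h0 : ∀ i, 0 ≤ c i) (h1 : ∑ i, c i = 1)
    {B : ℝ} (hv : ∀ i, B ≤ v i) : B ≤ ∑ i, c i * v i := by
  calc B = ∑ i, c i * B := by rw [← Finset.sum_mul, h1, one_mul]
    _ ≤ ∑ i, c i * v i :=
        Finset.sum_le_sum fun i _ => mul_le_mul_of_nonneg_left (hv i) (h0 i)

lemma my_comb4 {n : ℕ} (c a x y : Fin n → ℝ) (μ₁ μ₂ : ℝ) (h1 : ∑ i, c i = 1) :
    (∑ i, c i * a i) - μ₁ * (∑ i, c i * y i) - μ₂ * (∑ i, c i * x i) + μ₁ * μ₂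
      = ∑ i, c i * (a i - μ₁ * y i - μ₂ * x i + μ₁ * μ₂) := by
  have h2 : ∀ i ∈ Finset.univ, c i * (a i - μ₁ * y i - μ₂ * x i + μ₁ * μ₂)
      = (c i * a i - μ₁ * (c i * y i) - μ₂ * (c i * x i)) + (μ₁ * μ₂) * c i :=
    fun i _ => by ring
  rw [Finset.sum_congr rfl h2, Finset.sum_add_distrib, Finset.sum_sub_distrib,
    Finset.sum_sub_distrib, ← Finset.mul_sum, ← Finset.mul_sum, ← Finset.mul_sum, h1]
  ring

lemma my_subset_hull (S : Set (Measure Ω)) : S ⊆ convHullP S := by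
  intro P hP
  refine ⟨1, fun _ => 1, fun _ => P, by simp, fun _ => hP, by simp⟩

lemma my_mix2_mem {S : Set (Measure Ω)} {P₁ P₂ : Measure Ω} (h₁ : P₁ ∈ S) (h₂ : P₂ ∈ S)
    {t : ℝ} (ht0 : 0 ≤ t) (ht1 : t ≤ 1) :
    (ENNReal.ofReal t • P₁ + ENNReal.ofReal (1-t) • P₂) ∈ convHullP S := by
  refine ⟨2, ![ENNReal.ofReal t, ENNReal.ofReal (1-t)], ![P₁, P₂], ?_, ?_, ?_⟩
  · rw [Fin.sum_univ_two]
    simp only [Matrix.cons_val_zero, Matrix.cons_val_one, Matrix.head_cons]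
    rw [← ENNReal.ofReal_add ht0 (by linarith)]
    norm_num
  · intro i; fin_cases i <;> simpa
  · rw [Fin.sum_univ_two]
    simp

lemma my_mix2_int {P₁ P₂ : Measure Ω} {t : ℝ} (ht0 : 0 ≤ t) (ht1 : t ≤ 1) {f : Ω → ℝ}
    (h₁ : Integrable f P₁) (h₂ : Integrable f P₂) :
    ∫ ω, f ω ∂(ENNReal.ofReal t • P₁ + ENNReal.ofReal (1-t) • P₂)
      = t * ∫ ω, f ω ∂P₁ + (1-t) * ∫ ω, f ω ∂P₂ := by
  rw [integral_add_measure (h₁.smul_measure ofReal_ne_top) (h₂.smul_measure ofReal_ne_top),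
      integral_smul_measure, integral_smul_measure]
  simp [ENNReal.toReal_ofReal, ht0, smul_eq_mul, (by linarith : (0:ℝ) ≤ 1 - t)]

lemma my_hull_mem {S : Set (Measure Ω)} {f : Ω → ℝ} (hint : ∀ P ∈ S, Integrable f P)
    {Q : Measure Ω} (hQ : Q ∈ convHullP S) {lo hi : ℝ}
    (hf : ∀ P ∈ S, (∫ ω, f ω ∂P) ∈ Set.Icc lo hi) : (∫ ω, f ω ∂Q) ∈ Set.Icc lo hi := by
  obtain ⟨n, w, P, hw, hPS, rfl⟩ := hQ
  rw [(my_sum_int w P hw (fun i => hint _ (hPS i))).2]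
  have hct0 : ∀ i : Fin n, 0 ≤ (w i).toReal := fun i => ENNReal.toReal_nonneg
  have hct1 := my_wt_sum w hw
  exact ⟨my_conv_ge hct0 hct1 (fun i => (hf _ (hPS i)).1),
         my_conv_le hct0 hct1 (fun i => (hf _ (hPS i)).2)⟩

theorem stmt5 (S : Set (Measure Ω)) (hS : S.Nonempty)
    (hprob : ∀ P ∈ S, IsProbabilityMeasure P) (X Y : Ω → ℝ)
    (hXY : ∀ P ∈ S, MemLp X 2 P ∧ MemLp Y 2 P)
    (hbdd : BddAbove ((fun P => (∫ ω, (X ω) ^ 2 ∂P) + ∫ ω, (Y ω) ^ 2 ∂P) '' S)) :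
    sSup ((fun μ₂ => sInf ((fun μ₁ =>
        sSup ((fun P => ∫ ω, (X ω - μ₁) * (Y ω - μ₂) ∂P) '' S)) ''
          Set.Icc (sInf ((fun P => ∫ ω, X ω ∂P) '' S))
                  (sSup ((fun P => ∫ ω, X ω ∂P) '' S)))) ''
        Set.Icc (sInf ((fun P => ∫ ω, Y ω ∂P) '' S))
                (sSup ((fun P => ∫ ω, Y ω ∂P) '' S))) =
      sSup ((fun P => covP P X Y) '' convHullP S) := by
  classical
  obtain ⟨P₀, hP₀⟩ := hS
  obtain ⟨C, hCub⟩ := hbdd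
  have hC : ∀ P ∈ S, (∫ ω, (X ω)^2 ∂P) + ∫ ω, (Y ω)^2 ∂P ≤ C :=
    fun P hP => hCub (Set.mem_image_of_mem _ hP)
  have hsqX : ∀ P ∈ S, ∫ ω, (X ω)^2 ∂P ≤ C := by
    intro P hP
    have h2 : 0 ≤ ∫ ω, (Y ω)^2 ∂P := integral_nonneg fun ω => sq_nonneg _
    linarith [hC P hP]
  have hsqY : ∀ P ∈ S, ∫ ω, (Y ω)^2 ∂P ≤ C := by
    intro P hP
    have h2 : 0 ≤ ∫ ω, (X ω)^2 ∂P := integral_nonneg fun ω => sq_nonneg _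
    linarith [hC P hP]
  have hC0 : 0 ≤ C := by
    have h1 : 0 ≤ ∫ ω, (X ω)^2 ∂P₀ := integral_nonneg fun ω => sq_nonneg _
    have h2 : 0 ≤ ∫ ω, (Y ω)^2 ∂P₀ := integral_nonneg fun ω => sq_nonneg _
    linarith [hC P₀ hP₀]
  have hintX : ∀ P ∈ S, Integrable X P := fun P hP => by
    haveI := hprob P hP; exact (hXY P hP).1.integrable one_le_two
  have hintY : ∀ P ∈ S, Integrable Y P := fun P hP => by
    haveI := hprob P hP; exact (hXY P hP).2.integrable one_le_two
  have hintXY : ∀ P ∈ S, Integrable (fun ω => X ω * Y ω) P := fun P hP =>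
    my_int_mul (hXY P hP).1 (hXY P hP).2
  have hEXbd : ∀ P ∈ S, |∫ ω, X ω ∂P| ≤ (1+C)/2 := fun P hP =>
    my_absE_le (hprob P hP) (hXY P hP).1 (hsqX P hP)
  have hEYbd : ∀ P ∈ S, |∫ ω, Y ω ∂P| ≤ (1+C)/2 := fun P hP =>
    my_absE_le (hprob P hP) (hXY P hP).2 (hsqY P hP)
  have hEXYbd : ∀ P ∈ S, |∫ ω, X ω * Y ω ∂P| ≤ C/2 := fun P hP =>
    my_absEXY_le (hprob P hP) (hXY P hP).1 (hXY P hP).2 (hC P hP)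
  set m1 := sInf ((fun P : Measure Ω => ∫ ω, X ω ∂P) '' S) with hm1
  set M1 := sSup ((fun P : Measure Ω => ∫ ω, X ω ∂P) '' S) with hM1
  set m2 := sInf ((fun P : Measure Ω => ∫ ω, Y ω ∂P) '' S) with hm2
  set M2 := sSup ((fun P : Measure Ω => ∫ ω, Y ω ∂P) '' S) with hM2
  have hbddXa : BddAbove ((fun P : Measure Ω => ∫ ω, X ω ∂P) '' S) :=
    ⟨(1+C)/2, by rintro _ ⟨P, hP, rfl⟩; exact (abs_le.mp (hEXbd P hP)).2⟩
  have hbddXb : BddBelow ((fun P : Measure Ω => ∫ ω, X ω ∂P) '' S) :=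
    ⟨-((1+C)/2), by rintro _ ⟨P, hP, rfl⟩; exact (abs_le.mp (hEXbd P hP)).1⟩
  have hbddYa : BddAbove ((fun P : Measure Ω => ∫ ω, Y ω ∂P) '' S) :=
    ⟨(1+C)/2, by rintro _ ⟨P, hP, rfl⟩; exact (abs_le.mp (hEYbd P hP)).2⟩
  have hbddYb : BddBelow ((fun P : Measure Ω => ∫ ω, Y ω ∂P) '' S) :=
    ⟨-((1+C)/2), by rintro _ ⟨P, hP, rfl⟩; exact (abs_le.mp (hEYbd P hP)).1⟩
  have hXne : ((fun P : Measure Ω => ∫ ω, X ω ∂P) '' S).Nonempty := ⟨_, ⟨P₀, hP₀, rfl⟩⟩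
  have hYne : ((fun P : Measure Ω => ∫ ω, Y ω ∂P) '' S).Nonempty := ⟨_, ⟨P₀, hP₀, rfl⟩⟩
  have hmM1 : m1 ≤ M1 := csInf_le_csSup hXne hbddXb hbddXa
  have hmM2 : m2 ≤ M2 := csInf_le_csSup hYne hbddYb hbddYa
  have hmemX : ∀ P ∈ S, (∫ ω, X ω ∂P) ∈ Set.Icc m1 M1 := fun P hP =>
    ⟨csInf_le hbddXb ⟨P, hP, rfl⟩, le_csSup hbddXa ⟨P, hP, rfl⟩⟩
  have hmemY : ∀ P ∈ S, (∫ ω, Y ω ∂P) ∈ Set.Icc m2 M2 := fun P hP =>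
    ⟨csInf_le hbddYb ⟨P, hP, rfl⟩, le_csSup hbddYa ⟨P, hP, rfl⟩⟩
  have hm1lb : -((1+C)/2) ≤ m1 := by
    refine le_csInf hXne ?_
    rintro _ ⟨P, hP, rfl⟩
    exact (abs_le.mp (hEXbd P hP)).1
  have hM1ub : M1 ≤ (1+C)/2 := by
    refine csSup_le hXne ?_
    rintro _ ⟨P, hP, rfl⟩
    exact (abs_le.mp (hEXbd P hP)).2
  have hm2lb : -((1+C)/2) ≤ m2 := by
    refine le_csInf hYne ?_
    rintro _ ⟨P, hP, rfl⟩
    exact (abs_le.mp (hEYbd P hP)).1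
  have hM2ub : M2 ≤ (1+C)/2 := by
    refine csSup_le hYne ?_
    rintro _ ⟨P, hP, rfl⟩
    exact (abs_le.mp (hEYbd P hP)).2
  -- hull-level facts
  have hQX : ∀ Q ∈ convHullP S, (∫ ω, X ω ∂Q) ∈ Set.Icc m1 M1 := fun Q hQ =>
    my_hull_mem hintX hQ hmemX
  have hQY : ∀ Q ∈ convHullP S, (∫ ω, Y ω ∂Q) ∈ Set.Icc m2 M2 := fun Q hQ =>
    my_hull_mem hintY hQ hmemY
  have hQXY : ∀ Q ∈ convHullP S, (∫ ω, X ω * Y ω ∂Q) ∈ Set.Icc (-(C/2)) (C/2) := fun Q hQ =>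
    my_hull_mem hintXY hQ (fun P hP => abs_le.mp (hEXYbd P hP))
  have hcovbd : ∀ Q ∈ convHullP S, covP Q X Y ≤ C/2 + ((1+C)/2)^2 := by
    intro Q hQ
    have h1 := hQXY Q hQ
    have h2 := hQX Q hQ
    have h3 := hQY Q hQ
    have hx1 : -((1+C)/2) ≤ ∫ ω, X ω ∂Q := le_trans hm1lb h2.1
    have hx2 : (∫ ω, X ω ∂Q) ≤ (1+C)/2 := le_trans h2.2 hM1ub
    have hy1 : -((1+C)/2) ≤ ∫ ω, Y ω ∂Q := le_trans hm2lb h3.1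
    have hy2 : (∫ ω, Y ω ∂Q) ≤ (1+C)/2 := le_trans h3.2 hM2ub
    simp only [covP]
    nlinarith [mul_nonneg (by linarith : (0:ℝ) ≤ (1+C)/2 - ∫ ω, X ω ∂Q)
        (by linarith : (0:ℝ) ≤ (1+C)/2 - ∫ ω, Y ω ∂Q),
      mul_nonneg (by linarith : (0:ℝ) ≤ (1+C)/2 + ∫ ω, X ω ∂Q)
        (by linarith : (0:ℝ) ≤ (1+C)/2 + ∫ ω, Y ω ∂Q), h1.1, h1.2]
  set R := sSup ((fun P => covP P X Y) '' convHullP S) with hRdef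
  have hRne : ((fun P => covP P X Y) '' convHullP S).Nonempty :=
    ⟨_, ⟨P₀, my_subset_hull S hP₀, rfl⟩⟩
  have hRbdd : BddAbove ((fun P => covP P X Y) '' convHullP S) :=
    ⟨C/2 + ((1+C)/2)^2, by rintro _ ⟨Q, hQ, rfl⟩; exact hcovbd Q hQ⟩
  have hRub : ∀ Q ∈ convHullP S, covP Q X Y ≤ R := fun Q hQ => le_csSup hRbdd ⟨Q, hQ, rfl⟩
  -- F facts on S
  have hFexpS : ∀ P ∈ S, ∀ μ₁ μ₂ : ℝ, ∫ ω, (X ω - μ₁) * (Y ω - μ₂) ∂P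
      = (∫ ω, X ω * Y ω ∂P) - μ₁ * (∫ ω, Y ω ∂P) - μ₂ * (∫ ω, X ω ∂P) + μ₁ * μ₂ :=
    fun P hP μ₁ μ₂ => my_F_exp (hprob P hP) (hXY P hP).1 (hXY P hP).2 μ₁ μ₂
  have hFab : ∀ (μ₁ μ₂ : ℝ), ∀ P ∈ S, |∫ ω, (X ω - μ₁) * (Y ω - μ₂) ∂P|
      ≤ C/2 + |μ₁| * ((1+C)/2) + |μ₂| * ((1+C)/2) + |μ₁| * |μ₂| := by
    intro μ₁ μ₂ P hP
    rw [hFexpS P hP]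
    have h1 := abs_le.mp (hEXYbd P hP)
    have h2 : |μ₁ * ∫ ω, Y ω ∂P| ≤ |μ₁| * ((1+C)/2) := by
      rw [abs_mul]; exact mul_le_mul_of_nonneg_left (hEYbd P hP) (abs_nonneg _)
    have h3 : |μ₂ * ∫ ω, X ω ∂P| ≤ |μ₂| * ((1+C)/2) := by
      rw [abs_mul]; exact mul_le_mul_of_nonneg_left (hEXbd P hP) (abs_nonneg _)
    have h4 : |μ₁ * μ₂| = |μ₁| * |μ₂| := abs_mul _ _
    have h2' := abs_le.mp h2
    have h3' := abs_le.mp h3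
    have h5 := le_abs_self (μ₁ * μ₂)
    have h6 := neg_abs_le (μ₁ * μ₂)
    rw [abs_le]
    constructor
    · linarith [h1.1, h2'.2, h3'.2, h6, h4]
    · linarith [h1.2, h2'.1, h3'.1, h5, h4]
  set K := max |m1| |M1| with hKdef
  have hFbddA : ∀ μ₁ μ₂ : ℝ,
      BddAbove ((fun P : Measure Ω => ∫ ω, (X ω - μ₁) * (Y ω - μ₂) ∂P) '' S) :=
    fun μ₁ μ₂ => ⟨C/2 + |μ₁| * ((1+C)/2) + |μ₂| * ((1+C)/2) + |μ₁| * |μ₂|, by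
      rintro _ ⟨P, hP, rfl⟩
      exact (abs_le.mp (hFab μ₁ μ₂ P hP)).2⟩
  have hφlb : ∀ μ₂ : ℝ, ∀ μ₁ ∈ Set.Icc m1 M1,
      -(C/2 + K * ((1+C)/2) + |μ₂| * ((1+C)/2) + K * |μ₂|)
        ≤ sSup ((fun P : Measure Ω => ∫ ω, (X ω - μ₁) * (Y ω - μ₂) ∂P) '' S) := by
    intro μ₂ μ₁ hμ₁
    have hK : |μ₁| ≤ K := by
      rw [abs_le]
      constructor
      · have h5 := neg_abs_le m1
        have h6 := le_max_left |m1| |M1|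
        linarith [hμ₁.1]
      · have h5 := le_abs_self M1
        have h6 := le_max_right |m1| |M1|
        linarith [hμ₁.2]
    have h0 := le_csSup (hFbddA μ₁ μ₂) ⟨P₀, hP₀, rfl⟩
    have h1 := (abs_le.mp (hFab μ₁ μ₂ P₀ hP₀)).1
    have hK0 : 0 ≤ K := le_trans (abs_nonneg μ₁) hK
    nlinarith [mul_nonneg (by linarith : (0:ℝ) ≤ K - |μ₁|) (by linarith : (0:ℝ) ≤ (1+C)/2),
      mul_nonneg (by linarith : (0:ℝ) ≤ K - |μ₁|) (abs_nonneg μ₂)]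
  have hQle : ∀ Q ∈ convHullP S, ∀ μ₁ μ₂ : ℝ,
      (∫ ω, X ω * Y ω ∂Q) - μ₁ * (∫ ω, Y ω ∂Q) - μ₂ * (∫ ω, X ω ∂Q) + μ₁ * μ₂
        ≤ sSup ((fun P : Measure Ω => ∫ ω, (X ω - μ₁) * (Y ω - μ₂) ∂P) '' S) := by
    rintro Q ⟨n, w, P, hw, hPS, rfl⟩ μ₁ μ₂
    rw [(my_sum_int w P hw (fun i => hintXY _ (hPS i))).2,
        (my_sum_int w P hw (fun i => hintY _ (hPS i))).2,
        (my_sum_int w P hw (fun i => hintX _ (hPS i))).2]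
    have hcomb : (∑ i, (w i).toReal * ∫ ω, X ω * Y ω ∂(P i))
          - μ₁ * (∑ i, (w i).toReal * ∫ ω, Y ω ∂(P i))
          - μ₂ * (∑ i, (w i).toReal * ∫ ω, X ω ∂(P i)) + μ₁ * μ₂
        = ∑ i, (w i).toReal * ((∫ ω, X ω * Y ω ∂(P i)) - μ₁ * (∫ ω, Y ω ∂(P i))
            - μ₂ * (∫ ω, X ω ∂(P i)) + μ₁ * μ₂) :=
      my_comb4 (fun i => (w i).toReal) (fun i => ∫ ω, X ω * Y ω ∂(P i))
        (fun i => ∫ ω, X ω ∂(P i)) (fun i => ∫ ω, Y ω ∂(P i)) μ₁ μ₂ (my_wt_sum w hw)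
    rw [hcomb]
    refine my_conv_le (fun i => ENNReal.toReal_nonneg) (my_wt_sum w hw) fun i => ?_
    rw [← hFexpS _ (hPS i)]
    exact le_csSup (hFbddA μ₁ μ₂) ⟨P i, hPS i, rfl⟩
  have hard : ∀ μ₂ ∈ Set.Icc m2 M2,
      sInf ((fun μ₁ => sSup ((fun P : Measure Ω =>
        ∫ ω, (X ω - μ₁) * (Y ω - μ₂) ∂P) '' S)) '' Set.Icc m1 M1) ≤ R := by
    intro μ₂ hμ₂
    have hInne : ((fun μ₁ => sSup ((fun P : Measure Ω =>
        ∫ ω, (X ω - μ₁) * (Y ω - μ₂) ∂P) '' S)) '' Set.Icc m1 M1).Nonempty :=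
      ⟨_, ⟨m1, ⟨le_refl m1, hmM1⟩, rfl⟩⟩
    have hInbb : BddBelow ((fun μ₁ => sSup ((fun P : Measure Ω =>
        ∫ ω, (X ω - μ₁) * (Y ω - μ₂) ∂P) '' S)) '' Set.Icc m1 M1) := by
      refine ⟨-(C/2 + K * ((1+C)/2) + |μ₂| * ((1+C)/2) + K * |μ₂|), ?_⟩
      rintro _ ⟨μ₁, hμ₁, rfl⟩
      exact hφlb μ₂ μ₁ hμ₁
    set c0 := sInf ((fun μ₁ => sSup ((fun P : Measure Ω =>
        ∫ ω, (X ω - μ₁) * (Y ω - μ₂) ∂P) '' S)) '' Set.Icc m1 M1) with hc0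
    refine core_minimax (m := m1) (M := M1) (L := M2 - m2) hmM1 (by linarith)
      (A := (fun Q : Measure Ω => ((∫ ω, X ω * Y ω ∂Q) - μ₂ * (∫ ω, X ω ∂Q),
        (∫ ω, Y ω ∂Q) - μ₂, ∫ ω, X ω ∂Q)) '' convHullP S)
      (S := (fun Q : Measure Ω => ((∫ ω, X ω * Y ω ∂Q) - μ₂ * (∫ ω, X ω ∂Q),
        (∫ ω, Y ω ∂Q) - μ₂, ∫ ω, X ω ∂Q)) '' S)
      (Set.image_mono (my_subset_hull S)) ?_ ?_ ?_ ?_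
    · rintro _ ⟨Q, hQ, rfl⟩
      refine ⟨hQX Q hQ, ?_, ?_⟩
      · have h1 := hQY Q hQ
        show |(∫ ω, Y ω ∂Q) - μ₂| ≤ M2 - m2
        rw [abs_le]
        exact ⟨by linarith [h1.1, hμ₂.2], by linarith [h1.2, hμ₂.1]⟩
      · show (∫ ω, X ω * Y ω ∂Q) - μ₂ * (∫ ω, X ω ∂Q)
            - (∫ ω, X ω ∂Q) * ((∫ ω, Y ω ∂Q) - μ₂) ≤ R
        have h2 := hRub Q hQ
        simp only [covP] at h2
        have h3 : (∫ ω, X ω * Y ω ∂Q) - μ₂ * (∫ ω, X ω ∂Q)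
            - (∫ ω, X ω ∂Q) * ((∫ ω, Y ω ∂Q) - μ₂)
            = (∫ ω, X ω * Y ω ∂Q) - (∫ ω, X ω ∂Q) * (∫ ω, Y ω ∂Q) := by ring
        rw [h3]
        exact h2
    · rintro _ ⟨Q₁, h₁, rfl⟩ _ ⟨Q₂, h₂, rfl⟩ t ⟨ht0, ht1⟩
      refine ⟨ENNReal.ofReal t • Q₁ + ENNReal.ofReal (1-t) • Q₂,
        my_mix2_mem h₁ h₂ ht0 ht1, ?_⟩
      show ((∫ ω, X ω * Y ω ∂(ENNReal.ofReal t • Q₁ + ENNReal.ofReal (1-t) • Q₂))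
            - μ₂ * (∫ ω, X ω ∂(ENNReal.ofReal t • Q₁ + ENNReal.ofReal (1-t) • Q₂)),
          (∫ ω, Y ω ∂(ENNReal.ofReal t • Q₁ + ENNReal.ofReal (1-t) • Q₂)) - μ₂,
          ∫ ω, X ω ∂(ENNReal.ofReal t • Q₁ + ENNReal.ofReal (1-t) • Q₂))
        = (t * ((∫ ω, X ω * Y ω ∂Q₁) - μ₂ * (∫ ω, X ω ∂Q₁))
            + (1-t) * ((∫ ω, X ω * Y ω ∂Q₂) - μ₂ * (∫ ω, X ω ∂Q₂)),
          t * ((∫ ω, Y ω ∂Q₁) - μ₂) + (1-t) * ((∫ ω, Y ω ∂Q₂) - μ₂),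
          t * (∫ ω, X ω ∂Q₁) + (1-t) * (∫ ω, X ω ∂Q₂))
      rw [my_mix2_int ht0 ht1 (hintXY Q₁ h₁) (hintXY Q₂ h₂),
          my_mix2_int ht0 ht1 (hintX Q₁ h₁) (hintX Q₂ h₂),
          my_mix2_int ht0 ht1 (hintY Q₁ h₁) (hintY Q₂ h₂)]
      simp only [Prod.mk.injEq]
      refine ⟨by ring, by ring, trivial⟩
    · intro p hp ε hε
      have h1 : c0 ≤ sSup ((fun P : Measure Ω =>
          ∫ ω, (X ω - p) * (Y ω - μ₂) ∂P) '' S) := csInf_le hInbb ⟨p, hp, rfl⟩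
      have h2 : c0 - ε < sSup ((fun P : Measure Ω =>
          ∫ ω, (X ω - p) * (Y ω - μ₂) ∂P) '' S) := by linarith
      obtain ⟨v, ⟨P, hP, rfl⟩, hv⟩ := exists_lt_of_lt_csSup
        (Set.Nonempty.image _ ⟨P₀, hP₀⟩) h2
      simp only [] at hv
      refine ⟨_, ⟨P, hP, rfl⟩, ?_⟩
      show c0 - ε ≤ ((∫ ω, X ω * Y ω ∂P) - μ₂ * (∫ ω, X ω ∂P)) - p * ((∫ ω, Y ω ∂P) - μ₂)
      rw [hFexpS P hP p μ₂] at hv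
      have h3 : ((∫ ω, X ω * Y ω ∂P) - μ₂ * (∫ ω, X ω ∂P)) - p * ((∫ ω, Y ω ∂P) - μ₂)
          = (∫ ω, X ω * Y ω ∂P) - p * (∫ ω, Y ω ∂P) - μ₂ * (∫ ω, X ω ∂P) + p * μ₂ := by
        ring
      rw [h3]
      linarith
    · intro ε hε
      obtain ⟨v, ⟨μo, hμo, rfl⟩, hv⟩ := exists_lt_of_csInf_lt hInne
        (show sInf ((fun μ₁ => sSup ((fun P : Measure Ω =>
          ∫ ω, (X ω - μ₁) * (Y ω - μ₂) ∂P) '' S)) '' Set.Icc m1 M1) < c0 + ε by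
          rw [← hc0]; linarith)
      simp only [] at hv
      refine ⟨μo, hμo, ?_⟩
      rintro _ ⟨Q, hQ, rfl⟩
      have h2 := hQle Q hQ μo μ₂
      show ((∫ ω, X ω * Y ω ∂Q) - μ₂ * (∫ ω, X ω ∂Q)) - μo * ((∫ ω, Y ω ∂Q) - μ₂) ≤ c0 + ε
      have h3 : ((∫ ω, X ω * Y ω ∂Q) - μ₂ * (∫ ω, X ω ∂Q)) - μo * ((∫ ω, Y ω ∂Q) - μ₂)
          = (∫ ω, X ω * Y ω ∂Q) - μo * (∫ ω, Y ω ∂Q) - μ₂ * (∫ ω, X ω ∂Q) + μo * μ₂ := by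
        ring
      rw [h3]
      linarith
  refine le_antisymm ?_ ?_
  · refine csSup_le ⟨_, ⟨m2, ⟨le_refl m2, hmM2⟩, rfl⟩⟩ ?_
    rintro _ ⟨μ₂, hμ₂, rfl⟩
    exact hard μ₂ hμ₂
  · refine csSup_le hRne ?_
    rintro _ ⟨Q, hQ, rfl⟩
    have hEYQ := hQY Q hQ
    have h1 : covP Q X Y ≤ sInf ((fun μ₁ => sSup ((fun P : Measure Ω =>
        ∫ ω, (X ω - μ₁) * (Y ω - (∫ ω, Y ω ∂Q)) ∂P) '' S)) '' Set.Icc m1 M1) := by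
      refine le_csInf ⟨_, ⟨m1, ⟨le_refl m1, hmM1⟩, rfl⟩⟩ ?_
      rintro _ ⟨μ₁, hμ₁, rfl⟩
      have h2 := hQle Q hQ μ₁ (∫ ω, Y ω ∂Q)
      have h3 : covP Q X Y = (∫ ω, X ω * Y ω ∂Q) - μ₁ * (∫ ω, Y ω ∂Q)
          - (∫ ω, Y ω ∂Q) * (∫ ω, X ω ∂Q) + μ₁ * (∫ ω, Y ω ∂Q) := by
        simp only [covP]; ring
      rw [h3]
      exact h2
    refine h1.trans (le_csSup ?_ ⟨∫ ω, Y ω ∂Q, hEYQ, rfl⟩)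
    refine ⟨R, ?_⟩
    rintro _ ⟨μ₂, hμ₂, rfl⟩
    exact hard μ₂ hμ₂
end

section
/- Let Ē[Z] = sup_{P∈𝒫} E_P[Z] and C̄(X,Y) = sup_{P∈conv(𝒫)} Cov_P(X,Y). Set ρ_X = (sup_P E_P[X] + inf_P E_P[X])/2, Δ_X = sup_P E_P[X] − inf_P E_P[X], and similarly ρ_Y, Δ_Y. Then Ē[(X−ρ_X)(Y−ρ_Y)] − (1/4)Δ_XΔ_Y ≤ C̄(X,Y) ≤ Ē[(X−ρ_X)(Y−ρ_Y)] + (1/4)Δ_XΔ_Y. -/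
open MeasureTheory ENNReal

variable {Ω : Type*} [MeasurableSpace Ω]

lemma integrable_mul_of_L2 (P : Measure Ω) (X Y : Ω → ℝ)
    (hX : MemLp X 2 P) (hY : MemLp Y 2 P) :
    Integrable (fun ω => X ω * Y ω) P := by
  have h : MemLp (X • Y) 1 P := MemLp.smul hY hX
  simpa [smul_eq_mul] using (memLp_one_iff_integrable.mp h : Integrable (fun ω => X ω * Y ω) P)

lemma key_id (P : Measure Ω) [IsProbabilityMeasure P] (X Y : Ω → ℝ)
    (hX : MemLp X 2 P) (hY : MemLp Y 2 P) (a b : ℝ) :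
    ∫ ω, (X ω - a) * (Y ω - b) ∂P =
      (∫ ω, X ω * Y ω ∂P) - b * (∫ ω, X ω ∂P) - a * (∫ ω, Y ω ∂P) + a * b := by
  have hXi : Integrable X P := hX.integrable one_le_two
  have hYi : Integrable Y P := hY.integrable one_le_two
  have hXYi : Integrable (fun ω => X ω * Y ω) P := integrable_mul_of_L2 P X Y hX hY
  have hpt : ∀ ω, (X ω - a) * (Y ω - b) = X ω * Y ω - b * X ω - a * Y ω + a * b := by
    intro ω; ring
  have i1 : Integrable (fun ω => X ω * Y ω - b * X ω) P := hXYi.sub (hXi.const_mul b)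
  have i2 : Integrable (fun ω => X ω * Y ω - b * X ω - a * Y ω) P := i1.sub (hYi.const_mul a)
  simp_rw [hpt]
  rw [integral_add i2 (integrable_const _), integral_sub i1 (hYi.const_mul a),
    integral_sub hXYi (hXi.const_mul b), integral_const_mul, integral_const_mul, integral_const]
  simp

lemma mean_sq_bound (P : Measure Ω) [IsProbabilityMeasure P] (X : Ω → ℝ)
    (hX : MemLp X 2 P) : |∫ ω, X ω ∂P| ≤ (1 + ∫ ω, (X ω) ^ 2 ∂P) / 2 := by
  have hXi : Integrable X P := hX.integrable one_le_two
  have hX2i : Integrable (fun ω => (X ω) ^ 2) P := hX.integrable_sq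
  have h1 : ∫ ω, X ω ∂P ≤ ∫ ω, (1 + (X ω) ^ 2) / 2 ∂P := by
    refine integral_mono hXi ((((integrable_const (1:ℝ)).add hX2i).div_const 2)) ?_
    intro ω; nlinarith [sq_nonneg (X ω - 1)]
  have h2 : -∫ ω, X ω ∂P ≤ ∫ ω, (1 + (X ω) ^ 2) / 2 ∂P := by
    rw [← integral_neg]
    refine integral_mono hXi.neg ((((integrable_const (1:ℝ)).add hX2i).div_const 2)) ?_
    intro ω; simp only [Pi.neg_apply]; nlinarith [sq_nonneg (X ω + 1)]
  have h3 : ∫ ω, (1 + (X ω) ^ 2) / 2 ∂P = (1 + ∫ ω, (X ω) ^ 2 ∂P) / 2 := by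
    rw [integral_div, integral_add (integrable_const _) hX2i, integral_const]
    simp
  rw [abs_le]; constructor <;> linarith

lemma mul_sum_bound (P : Measure Ω) [IsProbabilityMeasure P] (X Y : Ω → ℝ)
    (hX : MemLp X 2 P) (hY : MemLp Y 2 P) :
    |∫ ω, X ω * Y ω ∂P| ≤ ((∫ ω, (X ω) ^ 2 ∂P) + ∫ ω, (Y ω) ^ 2 ∂P) / 2 := by
  have hXYi : Integrable (fun ω => X ω * Y ω) P := integrable_mul_of_L2 P X Y hX hY
  have hsum : Integrable (fun ω => ((X ω) ^ 2 + (Y ω) ^ 2) / 2) P :=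
    (hX.integrable_sq.add hY.integrable_sq).div_const 2
  have h1 : ∫ ω, X ω * Y ω ∂P ≤ ∫ ω, ((X ω) ^ 2 + (Y ω) ^ 2) / 2 ∂P := by
    refine integral_mono hXYi hsum ?_
    intro ω; nlinarith [sq_nonneg (X ω - Y ω)]
  have h2 : -∫ ω, X ω * Y ω ∂P ≤ ∫ ω, ((X ω) ^ 2 + (Y ω) ^ 2) / 2 ∂P := by
    rw [← integral_neg]
    refine integral_mono hXYi.neg hsum ?_
    intro ω; simp only [Pi.neg_apply]; nlinarith [sq_nonneg (X ω + Y ω)]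
  have h3 : ∫ ω, ((X ω) ^ 2 + (Y ω) ^ 2) / 2 ∂P
      = ((∫ ω, (X ω) ^ 2 ∂P) + ∫ ω, (Y ω) ^ 2 ∂P) / 2 := by
    rw [integral_div, integral_add hX.integrable_sq hY.integrable_sq]
  rw [abs_le]; constructor <;> linarith

lemma integral_combo {n : ℕ} (w : Fin n → ℝ≥0∞) (P : Fin n → Measure Ω)
    (hw : ∑ i, w i = 1) (f : Ω → ℝ) (hf : ∀ i, Integrable f (P i)) :
    ∫ ω, f ω ∂(∑ i, w i • P i) = ∑ i, (w i).toReal * ∫ ω, f ω ∂(P i) := by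
  have hne : ∀ i, w i ≠ ∞ := by
    intro i
    have : w i ≤ 1 := hw ▸ Finset.single_le_sum (fun j _ => zero_le) (Finset.mem_univ i)
    exact ne_top_of_le_ne_top one_ne_top this
  rw [integral_finset_sum_measure (fun i _ => (hf i).smul_measure (hne i))]
  refine Finset.sum_congr rfl fun i _ => ?_
  rw [integral_smul_measure]; rfl

lemma combo_mem_Icc {n : ℕ} (c : Fin n → ℝ) (hc0 : ∀ i, 0 ≤ c i) (hc1 : ∑ i, c i = 1)
    (v : Fin n → ℝ) (lo hi : ℝ) (h : ∀ i, v i ∈ Set.Icc lo hi) :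
    ∑ i, c i * v i ∈ Set.Icc lo hi := by
  constructor
  · calc lo = ∑ i, c i * lo := by rw [← Finset.sum_mul, hc1, one_mul]
      _ ≤ ∑ i, c i * v i :=
        Finset.sum_le_sum fun i _ => mul_le_mul_of_nonneg_left (h i).1 (hc0 i)
  · calc ∑ i, c i * v i ≤ ∑ i, c i * hi :=
        Finset.sum_le_sum fun i _ => mul_le_mul_of_nonneg_left (h i).2 (hc0 i)
      _ = hi := by rw [← Finset.sum_mul, hc1, one_mul]

theorem stmt10 (S : Set (Measure Ω)) (hS : S.Nonempty)
    (hprob : ∀ P ∈ S, IsProbabilityMeasure P) (X Y : Ω → ℝ)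
    (hXY : ∀ P ∈ S, MemLp X 2 P ∧ MemLp Y 2 P)
    (hbdd : BddAbove ((fun P => (∫ ω, (X ω) ^ 2 ∂P) + ∫ ω, (Y ω) ^ 2 ∂P) '' S))
    (ρX ρY ΔX ΔY : ℝ)
    (hρX : ρX = (sSup ((fun P => ∫ ω, X ω ∂P) '' S) + sInf ((fun P => ∫ ω, X ω ∂P) '' S)) / 2)
    (hρY : ρY = (sSup ((fun P => ∫ ω, Y ω ∂P) '' S) + sInf ((fun P => ∫ ω, Y ω ∂P) '' S)) / 2)
    (hΔX : ΔX = sSup ((fun P => ∫ ω, X ω ∂P) '' S) - sInf ((fun P => ∫ ω, X ω ∂P) '' S))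
    (hΔY : ΔY = sSup ((fun P => ∫ ω, Y ω ∂P) '' S) - sInf ((fun P => ∫ ω, Y ω ∂P) '' S)) :
    sSup ((fun P => ∫ ω, (X ω - ρX) * (Y ω - ρY) ∂P) '' S) - (1 / 4) * ΔX * ΔY ≤
      sSup ((fun P => covP P X Y) '' convHullP S) ∧
    sSup ((fun P => covP P X Y) '' convHullP S) ≤
      sSup ((fun P => ∫ ω, (X ω - ρX) * (Y ω - ρY) ∂P) '' S) + (1 / 4) * ΔX * ΔY := by
  classical
  obtain ⟨B, hB⟩ := hbdd
  have hBP : ∀ P ∈ S, (∫ ω, (X ω) ^ 2 ∂P) + (∫ ω, (Y ω) ^ 2 ∂P) ≤ B := fun P hP =>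
    hB (Set.mem_image_of_mem _ hP)
  set EX := (fun P : Measure Ω => ∫ ω, X ω ∂P) '' S with hEXdef
  set EY := (fun P : Measure Ω => ∫ ω, Y ω ∂P) '' S with hEYdef
  set EG := (fun P : Measure Ω => ∫ ω, (X ω - ρX) * (Y ω - ρY) ∂P) '' S with hEGdef
  set EC := (fun P : Measure Ω => covP P X Y) '' convHullP S with hECdef
  -- bounds on squared integrals
  have hX2B : ∀ P ∈ S, (∫ ω, (X ω) ^ 2 ∂P) ≤ B := by
    intro P hP
    have h2 := integral_nonneg (f := fun ω => (Y ω) ^ 2) (fun ω => sq_nonneg (Y ω)) (μ := P)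
    linarith [hBP P hP]
  have hY2B : ∀ P ∈ S, (∫ ω, (Y ω) ^ 2 ∂P) ≤ B := by
    intro P hP
    have h2 := integral_nonneg (f := fun ω => (X ω) ^ 2) (fun ω => sq_nonneg (X ω)) (μ := P)
    linarith [hBP P hP]
  -- bounds on means
  have hmXb : ∀ P ∈ S, |∫ ω, X ω ∂P| ≤ (1 + B) / 2 := by
    intro P hP
    haveI := hprob P hP
    have h := mean_sq_bound P X (hXY P hP).1
    have := hX2B P hP
    calc |∫ ω, X ω ∂P| ≤ (1 + ∫ ω, (X ω) ^ 2 ∂P) / 2 := h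
      _ ≤ (1 + B) / 2 := by linarith
  have hmYb : ∀ P ∈ S, |∫ ω, Y ω ∂P| ≤ (1 + B) / 2 := by
    intro P hP
    haveI := hprob P hP
    have h := mean_sq_bound P Y (hXY P hP).2
    have := hY2B P hP
    calc |∫ ω, Y ω ∂P| ≤ (1 + ∫ ω, (Y ω) ^ 2 ∂P) / 2 := h
      _ ≤ (1 + B) / 2 := by linarith
  have hEXa : BddAbove EX := by
    refine ⟨(1 + B) / 2, ?_⟩; rintro x ⟨P, hP, rfl⟩; exact (abs_le.mp (hmXb P hP)).2
  have hEXb : BddBelow EX := by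
    refine ⟨-((1 + B) / 2), ?_⟩; rintro x ⟨P, hP, rfl⟩; exact (abs_le.mp (hmXb P hP)).1
  have hEYa : BddAbove EY := by
    refine ⟨(1 + B) / 2, ?_⟩; rintro x ⟨P, hP, rfl⟩; exact (abs_le.mp (hmYb P hP)).2
  have hEYb : BddBelow EY := by
    refine ⟨-((1 + B) / 2), ?_⟩; rintro x ⟨P, hP, rfl⟩; exact (abs_le.mp (hmYb P hP)).1
  have hmX_mem : ∀ P ∈ S, (∫ ω, X ω ∂P) ∈ Set.Icc (sInf EX) (sSup EX) := fun P hP =>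
    ⟨csInf_le hEXb ⟨P, hP, rfl⟩, le_csSup hEXa ⟨P, hP, rfl⟩⟩
  have hmY_mem : ∀ P ∈ S, (∫ ω, Y ω ∂P) ∈ Set.Icc (sInf EY) (sSup EY) := fun P hP =>
    ⟨csInf_le hEYb ⟨P, hP, rfl⟩, le_csSup hEYa ⟨P, hP, rfl⟩⟩
  obtain ⟨P0, hP0⟩ := hS
  have hΔX0 : 0 ≤ ΔX := by
    have h := hmX_mem P0 hP0; rw [hΔX]; linarith [h.1, h.2]
  have hΔY0 : 0 ≤ ΔY := by
    have h := hmY_mem P0 hP0; rw [hΔY]; linarith [h.1, h.2]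
  -- EG bounded above
  have hEGa : BddAbove EG := by
    refine ⟨B / 2 + |ρY| * ((1 + B) / 2) + |ρX| * ((1 + B) / 2) + |ρX * ρY|, ?_⟩
    rintro x ⟨P, hP, rfl⟩
    haveI := hprob P hP
    have hid := key_id P X Y (hXY P hP).1 (hXY P hP).2 ρX ρY
    have hxy := mul_sum_bound P X Y (hXY P hP).1 (hXY P hP).2
    have hxyB : (∫ ω, X ω * Y ω ∂P) ≤ B / 2 := by
      have := (abs_le.mp hxy).2
      have h1 := hBP P hP
      linarith
    have e1 : -(ρY * ∫ ω, X ω ∂P) ≤ |ρY| * ((1 + B) / 2) := by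
      calc -(ρY * ∫ ω, X ω ∂P) ≤ |ρY * ∫ ω, X ω ∂P| := neg_le_abs _
        _ = |ρY| * |∫ ω, X ω ∂P| := abs_mul _ _
        _ ≤ |ρY| * ((1 + B) / 2) := mul_le_mul_of_nonneg_left (hmXb P hP) (abs_nonneg _)
    have e2 : -(ρX * ∫ ω, Y ω ∂P) ≤ |ρX| * ((1 + B) / 2) := by
      calc -(ρX * ∫ ω, Y ω ∂P) ≤ |ρX * ∫ ω, Y ω ∂P| := neg_le_abs _
        _ = |ρX| * |∫ ω, Y ω ∂P| := abs_mul _ _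
        _ ≤ |ρX| * ((1 + B) / 2) := mul_le_mul_of_nonneg_left (hmYb P hP) (abs_nonneg _)
    have e3 : ρX * ρY ≤ |ρX * ρY| := le_abs_self _
    simp only
    rw [hid]
    linarith
  have hEGne : EG.Nonempty := ⟨_, P0, hP0, rfl⟩
  -- membership of S in convHullP S
  have hmem_conv : ∀ P ∈ S, P ∈ convHullP S := by
    intro P hP
    refine ⟨1, fun _ => 1, fun _ => P, by simp, fun _ => hP, by simp⟩
  -- key upper bound for every element of the convex hull
  have hkey : ∀ Q ∈ convHullP S, covP Q X Y ≤ sSup EG + 1 / 4 * ΔX * ΔY := by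
    rintro Q ⟨n, w, P, hw1, hPS, rfl⟩
    set c : Fin n → ℝ := fun i => (w i).toReal with hcdef
    have hc0 : ∀ i, 0 ≤ c i := fun i => ENNReal.toReal_nonneg
    have hne : ∀ i, w i ≠ ∞ := fun i => ne_top_of_le_ne_top one_ne_top
      (hw1 ▸ Finset.single_le_sum (fun j _ => zero_le) (Finset.mem_univ i))
    have hc1 : ∑ i, c i = 1 := by
      have := ENNReal.toReal_sum (s := Finset.univ) (f := w) (fun i _ => hne i)
      rw [hw1] at this
      simpa using this.symm
    have hinst : ∀ i, IsProbabilityMeasure (P i) := fun i => hprob (P i) (hPS i)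
    have hXint : ∀ i, Integrable X (P i) := fun i => by
      haveI := hinst i; exact ((hXY _ (hPS i)).1).integrable one_le_two
    have hYint : ∀ i, Integrable Y (P i) := fun i => by
      haveI := hinst i; exact ((hXY _ (hPS i)).2).integrable one_le_two
    have hXYint : ∀ i, Integrable (fun ω => X ω * Y ω) (P i) := fun i =>
      integrable_mul_of_L2 (P i) X Y ((hXY _ (hPS i)).1) ((hXY _ (hPS i)).2)
    have hGint : ∀ i, Integrable (fun ω => (X ω - ρX) * (Y ω - ρY)) (P i) := fun i => by
      haveI := hinst i
      exact integrable_mul_of_L2 (P i) _ _ (((hXY _ (hPS i)).1).sub (memLp_const ρX))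
        (((hXY _ (hPS i)).2).sub (memLp_const ρY))
    have hIX := integral_combo w P hw1 X hXint
    have hIY := integral_combo w P hw1 Y hYint
    have hIXY := integral_combo w P hw1 (fun ω => X ω * Y ω) hXYint
    have hIG := integral_combo w P hw1 (fun ω => (X ω - ρX) * (Y ω - ρY)) hGint
    have hid : ∀ i, ∫ ω, (X ω - ρX) * (Y ω - ρY) ∂(P i)
        = (∫ ω, X ω * Y ω ∂(P i)) - ρY * (∫ ω, X ω ∂(P i)) - ρX * (∫ ω, Y ω ∂(P i))
          + ρX * ρY := fun i => by
      haveI := hinst i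
      exact key_id (P i) X Y ((hXY _ (hPS i)).1) ((hXY _ (hPS i)).2) ρX ρY
    set a := ∑ i, c i * ∫ ω, X ω ∂(P i) with hadef
    set b := ∑ i, c i * ∫ ω, Y ω ∂(P i) with hbdef
    have hsplit : ∑ i, c i * ∫ ω, (X ω - ρX) * (Y ω - ρY) ∂(P i)
        = (∑ i, c i * ∫ ω, X ω * Y ω ∂(P i)) - ρY * a - ρX * b + ρX * ρY := by
      have hterm : ∀ i ∈ Finset.univ, c i * ∫ ω, (X ω - ρX) * (Y ω - ρY) ∂(P i)
          = c i * ∫ ω, X ω * Y ω ∂(P i) - ρY * (c i * ∫ ω, X ω ∂(P i))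
            - ρX * (c i * ∫ ω, Y ω ∂(P i)) + ρX * ρY * c i := fun i _ => by
        rw [hid i]; ring
      rw [Finset.sum_congr rfl hterm, Finset.sum_add_distrib, Finset.sum_sub_distrib,
        Finset.sum_sub_distrib, ← Finset.mul_sum, ← Finset.mul_sum, ← Finset.mul_sum, hc1,
        mul_one, hadef, hbdef]
    have hcov : covP (∑ i, w i • P i) X Y
        = (∑ i, c i * ∫ ω, (X ω - ρX) * (Y ω - ρY) ∂(P i)) - (a - ρX) * (b - ρY) := by
      simp only [covP]
      rw [hIXY, hIX, hIY, hsplit]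
      ring
    have hga : ∑ i, c i * ∫ ω, (X ω - ρX) * (Y ω - ρY) ∂(P i) ≤ sSup EG := by
      calc ∑ i, c i * ∫ ω, (X ω - ρX) * (Y ω - ρY) ∂(P i) ≤ ∑ i, c i * sSup EG :=
          Finset.sum_le_sum fun i _ =>
            mul_le_mul_of_nonneg_left (le_csSup hEGa ⟨P i, hPS i, rfl⟩) (hc0 i)
        _ = sSup EG := by rw [← Finset.sum_mul, hc1, one_mul]
    have ha : a ∈ Set.Icc (sInf EX) (sSup EX) :=
      combo_mem_Icc c hc0 hc1 _ _ _ (fun i => hmX_mem (P i) (hPS i))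
    have hb : b ∈ Set.Icc (sInf EY) (sSup EY) :=
      combo_mem_Icc c hc0 hc1 _ _ _ (fun i => hmY_mem (P i) (hPS i))
    have habsa : |a - ρX| ≤ ΔX / 2 := by
      rw [abs_le, hρX, hΔX]; constructor <;> linarith [ha.1, ha.2]
    have habsb : |b - ρY| ≤ ΔY / 2 := by
      rw [abs_le, hρY, hΔY]; constructor <;> linarith [hb.1, hb.2]
    have hprod : |(a - ρX) * (b - ρY)| ≤ ΔX / 2 * (ΔY / 2) := by
      rw [abs_mul]
      exact mul_le_mul habsa habsb (abs_nonneg _) (by linarith)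
    have := neg_abs_le ((a - ρX) * (b - ρY))
    rw [hcov]
    linarith
  have hECa : BddAbove EC := by
    refine ⟨sSup EG + 1 / 4 * ΔX * ΔY, ?_⟩
    rintro x ⟨Q, hQ, rfl⟩; exact hkey Q hQ
  have hECne : EC.Nonempty := ⟨_, P0, hmem_conv P0 hP0, rfl⟩
  constructor
  · -- lower bound
    have hlow : ∀ x ∈ EG, x ≤ sSup EC + 1 / 4 * ΔX * ΔY := by
      rintro x ⟨P, hP, rfl⟩
      haveI := hprob P hP
      have hid := key_id P X Y (hXY P hP).1 (hXY P hP).2 ρX ρY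
      have hcc : covP P X Y = (∫ ω, (X ω - ρX) * (Y ω - ρY) ∂P)
          - ((∫ ω, X ω ∂P) - ρX) * ((∫ ω, Y ω ∂P) - ρY) := by
        simp only [covP]; rw [hid]; ring
      have h1 := hmX_mem P hP
      have h2 := hmY_mem P hP
      have habsa : |(∫ ω, X ω ∂P) - ρX| ≤ ΔX / 2 := by
        rw [abs_le, hρX, hΔX]; constructor <;> linarith [h1.1, h1.2]
      have habsb : |(∫ ω, Y ω ∂P) - ρY| ≤ ΔY / 2 := by
        rw [abs_le, hρY, hΔY]; constructor <;> linarith [h2.1, h2.2]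
      have hprod : |((∫ ω, X ω ∂P) - ρX) * ((∫ ω, Y ω ∂P) - ρY)| ≤ ΔX / 2 * (ΔY / 2) := by
        rw [abs_mul]
        exact mul_le_mul habsa habsb (abs_nonneg _) (by linarith)
      have hle : covP P X Y ≤ sSup EC := le_csSup hECa ⟨P, hmem_conv P hP, rfl⟩
      have := le_abs_self (((∫ ω, X ω ∂P) - ρX) * ((∫ ω, Y ω ∂P) - ρY))
      simp only
      linarith
    have := csSup_le hEGne hlow
    linarith
  · exact csSup_le hECne (by rintro x ⟨Q, hQ, rfl⟩; exact hkey Q hQ)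
end

section
/- Let 𝒫 = {P₁,…,P_K} be finitely many probability measures and X, Y random variables with finite second moments under each Pᵢ. Then the upper covariance C̄(X,Y) = sup_{P∈conv(𝒫)} Cov_P(X,Y) satisfies C̄(X,Y) = max over pairs 1 ≤ i < j ≤ K of C̄_{ij}(X,Y), where C̄_{ij}(X,Y) is the upper covariance computed over the two-element set {Pᵢ, Pⱼ}, i.e. sup over λ ∈ [0,1] of Cov_{λPᵢ+(1−λ)Pⱼ}(X,Y). (For K = 1 interpret the right side as Cov_{P₁}(X,Y).) -/
open MeasureTheory ENNReal

variable {Ω : Type*} [MeasurableSpace Ω]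

open Finset

namespace Stmt13Aux

variable {K : ℕ}

/-- objective on the simplex -/
def gfun (a b κ : Fin K → ℝ) (t : Fin K → ℝ) : ℝ :=
  (∑ i, t i * κ i) - (∑ i, t i * a i) * (∑ i, t i * b i)

/-- pair objective -/
def qfun (a b κ : Fin K → ℝ) (i j : Fin K) (s : ℝ) : ℝ :=
  (s * κ i + (1 - s) * κ j) - (s * a i + (1 - s) * a j) * (s * b i + (1 - s) * b j)

lemma gfun_add (a b κ t u : Fin K → ℝ) (r : ℝ) :
    gfun a b κ (fun c => t c + r * u c) =
      gfun a b κ t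
        + r * ((∑ i, u i * κ i) - (∑ i, u i * a i) * (∑ i, t i * b i)
            - (∑ i, u i * b i) * (∑ i, t i * a i))
        - r ^ 2 * ((∑ i, u i * a i) * (∑ i, u i * b i)) := by
  simp only [gfun, add_mul, Finset.sum_add_distrib, mul_assoc, ← Finset.mul_sum]
  ring

/-- Reduction step: given a direction `u` summing to 0, nonzero, supported in the support of `t`,
with nonpositive quadratic coefficient, we can move to `t'` with strictly smaller support and
no smaller objective. -/
lemma reduce (a b κ t u : Fin K → ℝ) (ht0 : ∀ i, 0 ≤ t i)
    (hu : ∃ c, u c ≠ 0) (husum : ∑ i, u i = 0) (hsupp : ∀ c, u c ≠ 0 → 0 < t c)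
    (hc2 : (∑ i, u i * a i) * (∑ i, u i * b i) ≤ 0) :
    ∃ t' : Fin K → ℝ, (∀ i, 0 ≤ t' i) ∧ (∑ i, t' i = ∑ i, t i) ∧
      (∀ c, t' c ≠ 0 → t c ≠ 0) ∧ (∃ c, t c ≠ 0 ∧ t' c = 0) ∧
      gfun a b κ t ≤ gfun a b κ t' := by
  set c₁ : ℝ := (∑ i, u i * κ i) - (∑ i, u i * a i) * (∑ i, t i * b i)
      - (∑ i, u i * b i) * (∑ i, t i * a i) with hc₁
  set σ : ℝ := if 0 ≤ c₁ then 1 else -1 with hσ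
  have hσ0 : σ ≠ 0 := by rcases le_or_gt 0 c₁ with h | h <;> simp [hσ, h, not_le.mpr] <;> norm_num
  have hσc₁ : 0 ≤ σ * c₁ := by
    rcases le_or_gt 0 c₁ with h | h
    · simp [hσ, h]
    · simp [hσ, not_le.mpr h]; linarith
  set v : Fin K → ℝ := fun c => σ * u c with hv
  have hvsum : ∑ i, v i = 0 := by simp [hv, ← Finset.mul_sum, husum]
  -- some coordinate of v is negative
  have hneg : ∃ c, v c < 0 := by
    by_contra h
    push_neg at h
    obtain ⟨c, hc⟩ := hu
    have : v c = 0 := by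
      have := (Finset.sum_eq_zero_iff_of_nonneg (fun i _ => h i)).mp hvsum c (mem_univ c)
      exact this
    exact hc (by
      have : σ * u c = 0 := this
      rcases mul_eq_zero.mp this with h' | h'
      · exact absurd h' hσ0
      · exact h')
  set Sneg := univ.filter (fun c => v c < 0) with hSneg
  have hSne : Sneg.Nonempty := by
    obtain ⟨c, hc⟩ := hneg
    exact ⟨c, by simp [hSneg, hc]⟩
  obtain ⟨cm, hcmmem, hcmmin⟩ := Finset.exists_min_image Sneg (fun c => t c / (-(v c))) hSne
  have hvcm : v cm < 0 := by simpa [hSneg] using hcmmem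
  set s : ℝ := t cm / (-(v cm)) with hs
  have hs0 : 0 ≤ s := div_nonneg (ht0 cm) (by linarith)
  refine ⟨fun c => t c + s * v c, ?_, ?_, ?_, ?_, ?_⟩
  · intro c
    show 0 ≤ t c + s * v c
    rcases le_or_gt 0 (v c) with h | h
    · have : 0 ≤ s * v c := mul_nonneg hs0 h
      linarith [ht0 c]
    · have hcS : c ∈ Sneg := by simp [hSneg, h]
      have hle : s ≤ t c / (-(v c)) := hcmmin c hcS
      have hpos : (0:ℝ) < -(v c) := by linarith
      have : s * (-(v c)) ≤ t c := by
        rw [← le_div_iff₀ hpos] at *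
        exact hle
      nlinarith
  · rw [Finset.sum_add_distrib, ← Finset.mul_sum, hvsum]; ring
  · intro c hc
    by_cases h : u c = 0
    · intro h0; apply hc; simp [hv, h, h0]
    · exact ne_of_gt (hsupp c h)
  · refine ⟨cm, ?_, ?_⟩
    · exact ne_of_gt (hsupp cm (by
        intro h; rw [hv] at hvcm; simp [h] at hvcm))
    · have : v cm ≠ 0 := ne_of_lt hvcm
      show t cm + s * v cm = 0
      rw [hs, div_mul_eq_mul_div, div_neg, mul_div_assoc, div_self this]
      ring
  · have hrw : (fun c => t c + s * v c) = fun c => t c + (s * σ) * u c := by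
      funext c; simp [hv]; ring
    rw [hrw, gfun_add]
    have h1 : 0 ≤ (s * σ) * c₁ := by
      have : (s * σ) * c₁ = s * (σ * c₁) := by ring
      rw [this]; exact mul_nonneg hs0 hσc₁
    have h2 : (s * σ) ^ 2 * ((∑ i, u i * a i) * (∑ i, u i * b i)) ≤ 0 :=
      mul_nonpos_of_nonneg_of_nonpos (sq_nonneg _) hc2
    rw [hc₁] at h1
    linarith

end Stmt13Aux

namespace Stmt13Aux2
open Stmt13Aux

lemma sum_two {K : ℕ} (t f : Fin K → ℝ) (i j : Fin K) (hij : i ≠ j)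
    (h0 : ∀ c, c ≠ i → c ≠ j → t c = 0) :
    ∑ c, t c * f c = t i * f i + t j * f j := by
  calc ∑ c, t c * f c = ∑ c ∈ ({i, j} : Finset (Fin K)), t c * f c :=
        (Finset.sum_subset (Finset.subset_univ _) (fun c _ hc => by
          have hci : c ≠ i := fun h => hc (by simp [h])
          have hcj : c ≠ j := fun h => hc (by simp [h])
          simp [h0 c hci hcj])).symm
    _ = t i * f i + t j * f j := Finset.sum_pair hij

lemma sum_one {K : ℕ} (t f : Fin K → ℝ) (i : Fin K)
    (h0 : ∀ c, c ≠ i → t c = 0) :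
    ∑ c, t c * f c = t i * f i := by
  exact Finset.sum_eq_single i (fun c _ hc => by simp [h0 c hc]) (by simp)

lemma key {K : ℕ} (a b κ : Fin K → ℝ) :
    ∀ n (t : Fin K → ℝ), (∀ i, 0 ≤ t i) → (∑ i, t i = 1) →
    (Finset.univ.filter (fun c => t c ≠ 0)).card ≤ n →
    ∃ i j, ∃ s ∈ Set.Icc (0:ℝ) 1, gfun a b κ t ≤ qfun a b κ i j s := by
  intro n
  induction n with
  | zero =>
    intro t ht0 hts hcard
    exfalso
    have hS : (Finset.univ.filter (fun c => t c ≠ 0)) = ∅ := Finset.card_eq_zero.mp (by omega)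
    have : ∀ c, t c = 0 := by
      intro c
      by_contra hc
      have : c ∈ (Finset.univ.filter (fun c => t c ≠ 0)) := by simp [hc]
      simp [hS] at this
    simp [this] at hts
  | succ n IH =>
    intro t ht0 hts hcard
    set S := Finset.univ.filter (fun c => t c ≠ 0) with hSdef
    have hmemS : ∀ c, c ∈ S ↔ t c ≠ 0 := by intro c; simp [hSdef]
    have hpos : ∀ c ∈ S, 0 < t c := fun c hc => lt_of_le_of_ne (ht0 c) (Ne.symm ((hmemS c).mp hc))
    by_cases h2 : S.card ≤ 2
    · -- base case: support has at most 2 elements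
      rcases Nat.lt_or_ge S.card 2 with h1 | h1
      · rcases Nat.lt_or_ge S.card 1 with h0' | h0'
        · exfalso
          have hS : S = ∅ := Finset.card_eq_zero.mp (by omega)
          have : ∀ c, t c = 0 := by
            intro c; by_contra hc
            have : c ∈ S := (hmemS c).mpr hc
            simp [hS] at this
          simp [this] at hts
        · -- card = 1
          obtain ⟨i, hSi⟩ := Finset.card_eq_one.mp (show S.card = 1 by omega)
          have hz : ∀ c, c ≠ i → t c = 0 := by
            intro c hc
            by_contra h
            have : c ∈ S := (hmemS c).mpr h
            rw [hSi] at this; simp at this; exact hc this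
          have hti : t i = 1 := by
            have := sum_one t (fun _ => 1) i hz
            simpa [hts] using this.symm
          refine ⟨i, i, 1, by norm_num, ?_⟩
          rw [gfun, qfun, sum_one t κ i hz, sum_one t a i hz, sum_one t b i hz, hti]
          ring_nf
          exact le_refl _
      · -- card = 2
        obtain ⟨i, j, hij, hSij⟩ := Finset.card_eq_two.mp (le_antisymm h2 h1)
        have hz : ∀ c, c ≠ i → c ≠ j → t c = 0 := by
          intro c hci hcj
          by_contra h
          have : c ∈ S := (hmemS c).mpr h
          rw [hSij] at this; simp at this; tauto
        have htij : t i + t j = 1 := by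
          have := sum_two t (fun _ => 1) i j hij hz
          simpa [hts] using this.symm
        refine ⟨i, j, t i, ⟨ht0 i, by linarith [ht0 j]⟩, ?_⟩
        have htj : t j = 1 - t i := by linarith
        rw [gfun, qfun, sum_two t κ i j hij hz, sum_two t a i j hij hz,
          sum_two t b i j hij hz, htj]
    · -- inductive step: support has ≥ 3 elements; reduce support
      have h3 : 3 ≤ S.card := by omega
      obtain ⟨i, hi⟩ := Finset.card_pos.mp (show 0 < S.card by omega)
      have herase : 2 ≤ (S.erase i).card := by
        rw [Finset.card_erase_of_mem hi]; omega
      obtain ⟨j, hj, k, hk, hjk⟩ := Finset.one_lt_card.mp (show 1 < (S.erase i).card by omega)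
      have hij : i ≠ j := (Finset.ne_of_mem_erase hj).symm
      have hik : i ≠ k := (Finset.ne_of_mem_erase hk).symm
      have hjS : j ∈ S := Finset.mem_of_mem_erase hj
      have hkS : k ∈ S := Finset.mem_of_mem_erase hk
      -- obtain a reduction
      have hred : ∃ t' : Fin K → ℝ, (∀ c, 0 ≤ t' c) ∧ (∑ c, t' c = ∑ c, t c) ∧
          (∀ c, t' c ≠ 0 → t c ≠ 0) ∧ (∃ c, t c ≠ 0 ∧ t' c = 0) ∧
          gfun a b κ t ≤ gfun a b κ t' := by
        by_cases hA : ∃ p ∈ S, ∃ q ∈ S, p ≠ q ∧ (a p - a q) * (b p - b q) ≤ 0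
        · obtain ⟨p, hp, q, hq, hpq, hprod⟩ := hA
          refine reduce a b κ t
            (fun c => (if c = p then (1:ℝ) else 0) - (if c = q then 1 else 0)) ht0
            ⟨p, by simp [hpq]⟩ ?_ ?_ ?_
          · simp [Finset.sum_sub_distrib]
          · intro c hc
            have : c = p ∨ c = q := by
              by_contra h
              push_neg at h
              simp [h.1, h.2] at hc
            rcases this with h | h
            · exact h ▸ hpos p hp
            · exact h ▸ hpos q hq
          · have ha : ∑ c, ((if c = p then (1:ℝ) else 0) - (if c = q then 1 else 0)) * a c
                = a p - a q := by
              simp [sub_mul, Finset.sum_sub_distrib, ite_mul]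
            have hb : ∑ c, ((if c = p then (1:ℝ) else 0) - (if c = q then 1 else 0)) * b c
                = b p - b q := by
              simp [sub_mul, Finset.sum_sub_distrib, ite_mul]
            rw [ha, hb]; exact hprod
        · push_neg at hA
          have hane : a j ≠ a k := by
            intro h
            have := hA j hjS k hkS hjk
            rw [h] at this; simp at this
          refine reduce a b κ t
            (fun c => (if c = i then a j - a k else 0) + (if c = j then a k - a i else 0)
              + (if c = k then a i - a j else 0)) ht0
            ⟨i, by simp [hij, hik, sub_ne_zero.mpr hane]⟩ ?_ ?_ ?_
          · simp [Finset.sum_add_distrib]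
          · intro c hc
            have : c = i ∨ c = j ∨ c = k := by
              by_contra h
              push_neg at h
              simp [h.1, h.2.1, h.2.2] at hc
            rcases this with h | h | h
            · exact h ▸ hpos i hi
            · exact h ▸ hpos j hjS
            · exact h ▸ hpos k hkS
          · have ha : ∑ c, ((if c = i then a j - a k else 0) + (if c = j then a k - a i else 0)
                + (if c = k then a i - a j else 0)) * a c = 0 := by
              simp [add_mul, Finset.sum_add_distrib, ite_mul, hij.symm, hik.symm, hjk]
              ring
            rw [ha]; simp
      obtain ⟨t', ht'0, ht's, ht'supp, ⟨c0, hc0t, hc0t'⟩, hle⟩ := hred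
      have hsub : (Finset.univ.filter (fun c => t' c ≠ 0)) ⊆ S := by
        intro c hc
        simp only [Finset.mem_filter] at hc
        exact (hmemS c).mpr (ht'supp c hc.2)
      have hcard' : (Finset.univ.filter (fun c => t' c ≠ 0)).card ≤ n := by
        have hssub : (Finset.univ.filter (fun c => t' c ≠ 0)) ⊂ S := by
          refine Finset.ssubset_iff_of_subset hsub |>.mpr ⟨c0, (hmemS c0).mpr hc0t, ?_⟩
          simp [hc0t']
        have := Finset.card_lt_card hssub
        omega
      obtain ⟨i', j', s, hs, hq⟩ := IH t' ht'0 (by rw [ht's]; exact hts) hcard'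
      exact ⟨i', j', s, hs, le_trans hle hq⟩

end Stmt13Aux2


namespace Stmt13Bridge
open Stmt13Aux Stmt13Aux2

variable {K : ℕ} (P : Fin K → Measure Ω) (X Y : Ω → ℝ)

lemma integrable_all (hprob : ∀ i, IsProbabilityMeasure (P i))
    (hXY : ∀ i, MemLp X 2 (P i) ∧ MemLp Y 2 (P i)) (i : Fin K) :
    Integrable X (P i) ∧ Integrable Y (P i) ∧
      Integrable (fun ω => X ω * Y ω) (P i) := by
  have h1 := (hXY i).1
  have h2 := (hXY i).2
  refine ⟨h1.integrable (by norm_num), h2.integrable (by norm_num), ?_⟩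
  have := h2.smul (𝕜 := ℝ) h1 (p := 2) (q := 2) (r := 1)
  exact memLp_one_iff_integrable.mp this

/-- covariance of a convex combination in terms of `gfun`. -/
lemma covP_combo (hprob : ∀ i, IsProbabilityMeasure (P i))
    (hXY : ∀ i, MemLp X 2 (P i) ∧ MemLp Y 2 (P i))
    (w : Fin K → ℝ≥0∞) (hw : ∑ i, w i = 1) :
    covP (∑ i, w i • P i) X Y =
      gfun (fun i => ∫ ω, X ω ∂P i) (fun i => ∫ ω, Y ω ∂P i)
        (fun i => ∫ ω, X ω * Y ω ∂P i) (fun i => (w i).toReal) := by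
  have hwt : ∀ i, w i ≠ ⊤ := by
    intro i
    have hle : w i ≤ 1 := hw ▸ Finset.single_le_sum (fun j _ => zero_le) (Finset.mem_univ i)
    exact ne_top_of_le_ne_top one_ne_top hle
  have hint := integrable_all P X Y hprob hXY
  have key : ∀ f : Ω → ℝ, (∀ i, Integrable f (P i)) →
      ∫ ω, f ω ∂(∑ i, w i • P i) = ∑ i, (w i).toReal * ∫ ω, f ω ∂P i := by
    intro f hf
    rw [integral_finset_sum_measure (fun i _ => (hf i).smul_measure (hwt i))]
    exact Finset.sum_congr rfl fun i _ => integral_smul_measure f (w i)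
  rw [covP, key X (fun i => (hint i).1), key Y (fun i => (hint i).2.1),
    key (fun ω => X ω * Y ω) (fun i => (hint i).2.2), gfun]

/-- covariance of a two-point mixture in terms of `qfun`. -/
lemma covP_two (hprob : ∀ i, IsProbabilityMeasure (P i))
    (hXY : ∀ i, MemLp X 2 (P i) ∧ MemLp Y 2 (P i))
    (i j : Fin K) (s : ℝ) (hs : s ∈ Set.Icc (0:ℝ) 1) :
    covP (ENNReal.ofReal s • P i + ENNReal.ofReal (1 - s) • P j) X Y =
      qfun (fun i => ∫ ω, X ω ∂P i) (fun i => ∫ ω, Y ω ∂P i)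
        (fun i => ∫ ω, X ω * Y ω ∂P i) i j s := by
  have hint := integrable_all P X Y hprob hXY
  have key : ∀ f : Ω → ℝ, (∀ k, Integrable f (P k)) →
      ∫ ω, f ω ∂(ENNReal.ofReal s • P i + ENNReal.ofReal (1 - s) • P j)
        = s * (∫ ω, f ω ∂P i) + (1 - s) * ∫ ω, f ω ∂P j := by
    intro f hf
    rw [integral_add_measure ((hf i).smul_measure ofReal_ne_top)
        ((hf j).smul_measure ofReal_ne_top),
      integral_smul_measure, integral_smul_measure,
      ENNReal.toReal_ofReal hs.1, ENNReal.toReal_ofReal (by linarith [hs.2])]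
    rfl
  rw [covP, key X (fun k => (hint k).1), key Y (fun k => (hint k).2.1),
    key (fun ω => X ω * Y ω) (fun k => (hint k).2.2), qfun]

lemma mem_hull_two (i j : Fin K) (s : ℝ) (hs : s ∈ Set.Icc (0:ℝ) 1) :
    ENNReal.ofReal s • P i + ENNReal.ofReal (1 - s) • P j ∈ convHullP (Set.range P) := by
  refine ⟨2, ![ENNReal.ofReal s, ENNReal.ofReal (1 - s)], ![P i, P j], ?_, ?_, ?_⟩
  · rw [Fin.sum_univ_two]
    simp only [Matrix.cons_val_zero, Matrix.cons_val_one, Matrix.head_cons]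
    rw [← ENNReal.ofReal_add hs.1 (by linarith [hs.2])]
    norm_num
  · intro m
    fin_cases m <;> simp
  · rw [Fin.sum_univ_two]
    simp

end Stmt13Bridge

theorem stmt13 (K : ℕ) (hK : 1 ≤ K) (P : Fin K → Measure Ω)
    (hprob : ∀ i, IsProbabilityMeasure (P i)) (X Y : Ω → ℝ)
    (hXY : ∀ i, MemLp X 2 (P i) ∧ MemLp Y 2 (P i)) :
    sSup ((fun Q => covP Q X Y) '' convHullP (Set.range P)) =
      ⨆ i : Fin K, ⨆ j : Fin K,
        sSup ((fun t : ℝ =>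
          covP (ENNReal.ofReal t • P i + ENNReal.ofReal (1 - t) • P j) X Y) ''
            Set.Icc (0 : ℝ) 1) := by
  classical
  open Stmt13Aux Stmt13Aux2 Stmt13Bridge in
  set a : Fin K → ℝ := fun i => ∫ ω, X ω ∂P i with ha
  set b : Fin K → ℝ := fun i => ∫ ω, Y ω ∂P i with hb
  set κ : Fin K → ℝ := fun i => ∫ ω, X ω * Y ω ∂P i with hκ
  set mix : Fin K → Fin K → ℝ → Measure Ω := fun i j s =>
    ENNReal.ofReal s • P i + ENNReal.ofReal (1 - s) • P j with hmix
  have hcovtwo : ∀ i j, ∀ s ∈ Set.Icc (0:ℝ) 1,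
      covP (mix i j s) X Y = qfun a b κ i j s := fun i j s hs =>
    covP_two P X Y hprob hXY i j s hs
  -- inner sets
  set inner : Fin K → Fin K → Set ℝ := fun i j =>
    (fun t : ℝ => covP (ENNReal.ofReal t • P i + ENNReal.ofReal (1 - t) • P j) X Y) ''
      Set.Icc (0 : ℝ) 1 with hinner
  have hinner_eq : ∀ i j, inner i j = (fun s => qfun a b κ i j s) '' Set.Icc 0 1 := by
    intro i j
    exact Set.image_congr fun s hs => hcovtwo i j s hs
  have hqcont : ∀ i j, Continuous fun s => qfun a b κ i j s := by
    intro i j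
    unfold qfun
    continuity
  have hinner_bdd : ∀ i j, BddAbove (inner i j) := by
    intro i j
    rw [hinner_eq]
    exact (isCompact_Icc.image (hqcont i j)).bddAbove
  have hinner_ne : ∀ i j, (inner i j).Nonempty :=
    fun i j => ⟨_, ⟨0, by norm_num, rfl⟩⟩
  -- q values are at most the RHS
  have hRHS_bdd : BddAbove (Set.range fun i : Fin K => ⨆ j, sSup (inner i j)) :=
    (Set.finite_range _).bddAbove
  have hRHS_bdd2 : ∀ i, BddAbove (Set.range fun j : Fin K => sSup (inner i j)) :=
    fun i => (Set.finite_range _).bddAbove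
  have hq_le_RHS : ∀ i j, ∀ s ∈ Set.Icc (0:ℝ) 1,
      qfun a b κ i j s ≤ ⨆ i : Fin K, ⨆ j : Fin K, sSup (inner i j) := by
    intro i j s hs
    have h1 : qfun a b κ i j s ≤ sSup (inner i j) := by
      apply le_csSup (hinner_bdd i j)
      rw [hinner_eq]
      exact ⟨s, hs, rfl⟩
    have h2 : sSup (inner i j) ≤ ⨆ j, sSup (inner i j) := le_ciSup (hRHS_bdd2 i) j
    have h3 : (⨆ j, sSup (inner i j)) ≤ ⨆ i, ⨆ j, sSup (inner i j) := le_ciSup hRHS_bdd i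
    linarith
  -- every element of the LHS set is bounded by the RHS
  have hhull : ∀ Q ∈ convHullP (Set.range P),
      covP Q X Y ≤ ⨆ i : Fin K, ⨆ j : Fin K, sSup (inner i j) := by
    rintro Q ⟨n, w, Pm, hwsum, hPm, rfl⟩
    choose g hg using fun m => (hPm m : ∃ i, P i = Pm m)
    set v : Fin K → ℝ≥0∞ := fun i => ∑ m ∈ Finset.univ.filter (fun m => g m = i), w m
      with hv
    have hQ : ∑ m, w m • Pm m = ∑ i, v i • P i := by
      rw [← Finset.sum_fiberwise Finset.univ g (fun m => w m • Pm m)]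
      refine Finset.sum_congr rfl fun i _ => ?_
      rw [hv]
      rw [Finset.sum_smul]
      refine Finset.sum_congr rfl fun m hm => ?_
      simp only [Finset.mem_filter] at hm
      rw [← hm.2, hg m]
    have hvsum : ∑ i, v i = 1 := by
      rw [hv, Finset.sum_fiberwise Finset.univ g w]
      exact hwsum
    rw [hQ, covP_combo P X Y hprob hXY v hvsum]
    have hvt : ∀ i, v i ≠ ⊤ := by
      intro i
      have hle : v i ≤ 1 := hvsum ▸ Finset.single_le_sum
        (fun j _ => zero_le) (Finset.mem_univ i)
      exact ne_top_of_le_ne_top one_ne_top hle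
    have htsum : ∑ i, (v i).toReal = 1 := by
      rw [← ENNReal.toReal_sum (fun i _ => hvt i), hvsum, ENNReal.toReal_one]
    obtain ⟨i, j, s, hs, hle⟩ := Stmt13Aux2.key a b κ K (fun i => (v i).toReal)
      (fun i => ENNReal.toReal_nonneg) htsum
      (le_trans (Finset.card_filter_le _ _) (by simp))
    exact le_trans hle (hq_le_RHS i j s hs)
  have hLHS_ne : ((fun Q => covP Q X Y) '' convHullP (Set.range P)).Nonempty := by
    refine ⟨covP (P ⟨0, hK⟩) X Y, ⟨P ⟨0, hK⟩, ?_, rfl⟩⟩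
    exact ⟨1, fun _ => 1, fun _ => P ⟨0, hK⟩, by simp, fun _ => ⟨_, rfl⟩, by simp⟩
  have hLHS_bdd : BddAbove ((fun Q => covP Q X Y) '' convHullP (Set.range P)) := by
    refine ⟨⨆ i : Fin K, ⨆ j : Fin K, sSup (inner i j), ?_⟩
    rintro x ⟨Q, hQ, rfl⟩
    exact hhull Q hQ
  have : Nonempty (Fin K) := ⟨⟨0, hK⟩⟩
  apply le_antisymm
  · apply csSup_le hLHS_ne
    rintro x ⟨Q, hQ, rfl⟩
    exact hhull Q hQ
  · apply ciSup_le
    intro i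
    apply ciSup_le
    intro j
    apply csSup_le (hinner_ne i j)
    rintro x ⟨s, hs, rfl⟩
    apply le_csSup hLHS_bdd
    exact ⟨_, mem_hull_two P i j s hs, rfl⟩
end

section
/- Let K ≥ 1 and m, n, k ∈ ℝ^K with coordinates μᵢ, νᵢ, κᵢ. Consider the quadratic program V = max over λ in the simplex Δ^K of (λᵀk − (λᵀm)(λᵀn)). Then the maximum is attained at a point of Δ^K supported on at most two coordinates; more precisely V = max over 1 ≤ i ≤ j ≤ K of max over λ ∈ [0,1] of (λκᵢ + (1−λ)κⱼ − (λμᵢ + (1−λ)μⱼ)(λνᵢ + (1−λ)νⱼ)). -/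
noncomputable section
namespace Stmt14Aux

variable {K : ℕ}

def Fq (m n k : Fin K → ℝ) (l : Fin K → ℝ) : ℝ :=
  (∑ i, l i * k i) - (∑ i, l i * m i) * (∑ i, l i * n i)

def edge (m n k : Fin K → ℝ) (i j : Fin K) (t : ℝ) : ℝ :=
  (t * k i + (1 - t) * k j) - (t * m i + (1 - t) * m j) * (t * n i + (1 - t) * n j)

def pt (i j : Fin K) (t : ℝ) : Fin K → ℝ :=
  fun p => t * (if p = i then 1 else 0) + (1 - t) * (if p = j then 1 else 0)

lemma sum_pt (i j : Fin K) (t : ℝ) (f : Fin K → ℝ) :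
    ∑ p, pt i j t p * f p = t * f i + (1 - t) * f j := by
  simp [pt, add_mul, Finset.sum_add_distrib, mul_ite, ite_mul, mul_assoc,
    Finset.sum_ite_eq']

lemma pt_mem (i j : Fin K) {t : ℝ} (ht : t ∈ Set.Icc (0:ℝ) 1) :
    pt i j t ∈ stdSimplex ℝ (Fin K) := by
  constructor
  · intro p
    have h1 : (0:ℝ) ≤ (if p = i then (1:ℝ) else 0) := by split <;> norm_num
    have h2 : (0:ℝ) ≤ (if p = j then (1:ℝ) else 0) := by split <;> norm_num
    exact add_nonneg (mul_nonneg ht.1 h1) (mul_nonneg (by linarith [ht.2]) h2)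
  · have := sum_pt i j t (fun _ => 1)
    simpa using this

lemma Fq_pt (m n k : Fin K → ℝ) (i j : Fin K) (t : ℝ) :
    Fq m n k (pt i j t) = edge m n k i j t := by
  simp [Fq, edge, sum_pt]

lemma cont_Fq (m n k : Fin K → ℝ) : Continuous (Fq m n k) := by
  unfold Fq; fun_prop

lemma cont_edge (m n k : Fin K → ℝ) (i j : Fin K) : Continuous (edge m n k i j) := by
  unfold edge; fun_prop

lemma bdd_edge (m n k : Fin K → ℝ) (i j : Fin K) :
    BddAbove (edge m n k i j '' Set.Icc (0:ℝ) 1) :=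
  (isCompact_Icc.image (cont_edge m n k i j)).bddAbove

lemma bdd_lhs (m n k : Fin K → ℝ) :
    BddAbove (Fq m n k '' stdSimplex ℝ (Fin K)) :=
  ((isCompact_stdSimplex ℝ (Fin K)).image (cont_Fq m n k)).bddAbove

def Rhs (m n k : Fin K → ℝ) : ℝ :=
  ⨆ i : Fin K, ⨆ j : Fin K, sSup (edge m n k i j '' Set.Icc (0:ℝ) 1)

lemma edge_le_Rhs [Nonempty (Fin K)] (m n k : Fin K → ℝ) (i j : Fin K) {t : ℝ}
    (ht : t ∈ Set.Icc (0:ℝ) 1) : edge m n k i j t ≤ Rhs m n k := by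
  refine le_ciSup_of_le (Set.Finite.bddAbove (Set.finite_range _)) i ?_
  refine le_ciSup_of_le (Set.Finite.bddAbove (Set.finite_range _)) j ?_
  exact le_csSup (bdd_edge m n k i j) ⟨t, ht, rfl⟩

/-- If the support of `l` fits in two points, its value is an edge value. -/
lemma base [Nonempty (Fin K)] (m n k : Fin K → ℝ) {l : Fin K → ℝ}
    (hl : l ∈ stdSimplex ℝ (Fin K))
    (h2 : (Finset.univ.filter fun p => l p ≠ 0).card ≤ 2) :
    Fq m n k l ≤ Rhs m n k := by
  classical
  set S : Finset (Fin K) := Finset.univ.filter fun p => l p ≠ 0 with hS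
  have hsub : ∀ f : Fin K → ℝ, ∑ p, l p * f p = ∑ p ∈ S, l p * f p := by
    intro f
    refine (Finset.sum_subset (Finset.subset_univ S) ?_).symm
    intro p _ hp
    have : l p = 0 := by by_contra h; exact hp (by simp [hS, h])
    simp [this]
  have hsum1 : ∑ p, l p = 1 := hl.2
  obtain ⟨i, j, t, ht, hrepr⟩ :
      ∃ i j t, t ∈ Set.Icc (0:ℝ) 1 ∧
        ∀ f : Fin K → ℝ, ∑ p, l p * f p = t * f i + (1 - t) * f j := by
    interval_cases h : S.card
    · -- card 0 : contradiction
      exfalso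
      have hS0 : S = ∅ := Finset.card_eq_zero.mp h
      have := hsub (fun _ => 1)
      simp [hS0] at this
      rw [hsum1] at this; norm_num at this
    · obtain ⟨i, hi⟩ := Finset.card_eq_one.mp h
      have hli : l i = 1 := by
        have := hsub (fun _ => 1)
        simp [hi] at this
        rw [hsum1] at this
        linarith
      refine ⟨i, i, 1, by norm_num, fun f => ?_⟩
      rw [hsub f, hi]
      simp [hli]
    · obtain ⟨i, j, hij, hij2⟩ := Finset.card_eq_two.mp h
      have hli : 0 ≤ l i := hl.1 i
      have hlj : 0 ≤ l j := hl.1 j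
      have hsumij : l i + l j = 1 := by
        have := hsub (fun _ => 1)
        simp [hij2, Finset.sum_pair hij] at this
        rw [hsum1] at this
        linarith
      refine ⟨i, j, l i, ⟨hli, by linarith⟩, fun f => ?_⟩
      rw [hsub f, hij2, Finset.sum_pair hij]
      have : l j = 1 - l i := by linarith
      rw [this]
  have : Fq m n k l = edge m n k i j t := by
    simp [Fq, edge, hrepr]
  rw [this]
  exact edge_le_Rhs m n k i j ht


lemma sum3 {a b c : Fin K} (hab : a ≠ b) (hac : a ≠ c) (hbc : b ≠ c)
    (x y z : ℝ) (f : Fin K → ℝ) :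
    ∑ p, ((if p = a then x else 0) + (if p = b then y else 0) +
      (if p = c then z else 0)) * f p = x * f a + y * f b + z * f c := by
  simp [add_mul, Finset.sum_add_distrib, ite_mul, Finset.sum_ite_eq']

lemma descent (m n k : Fin K → ℝ) {l : Fin K → ℝ} (hl : l ∈ stdSimplex ℝ (Fin K))
    (h3 : 3 ≤ (Finset.univ.filter fun p => l p ≠ 0).card) :
    ∃ l' ∈ stdSimplex ℝ (Fin K), Fq m n k l ≤ Fq m n k l' ∧
      (Finset.univ.filter fun p => l' p ≠ 0).card <
        (Finset.univ.filter fun p => l p ≠ 0).card := by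
  classical
  set S : Finset (Fin K) := Finset.univ.filter fun p => l p ≠ 0 with hS
  obtain ⟨T, hTS, hT3⟩ := Finset.exists_subset_card_eq h3
  obtain ⟨a, b, c, hab, hac, hbc, rfl⟩ := Finset.card_eq_three.mp hT3
  have hmemS : ∀ p ∈ ({a, b, c} : Finset (Fin K)), 0 < l p := by
    intro p hp
    have := hTS hp
    rw [hS, Finset.mem_filter] at this
    exact lt_of_le_of_ne (hl.1 p) (Ne.symm this.2)
  set Lm : ℝ := ∑ p, l p * m p with hLm
  -- choose a direction (x, y, z)
  obtain ⟨x, y, z, hxyz, hm0, hne, hB⟩ :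
      ∃ x y z : ℝ, x + y + z = 0 ∧ x * m a + y * m b + z * m c = 0 ∧
        ¬(x = 0 ∧ y = 0 ∧ z = 0) ∧
        0 ≤ (x * k a + y * k b + z * k c) - Lm * (x * n a + y * n b + z * n c) := by
    obtain ⟨x, y, z, hxyz, hm0, hne⟩ :
        ∃ x y z : ℝ, x + y + z = 0 ∧ x * m a + y * m b + z * m c = 0 ∧
          ¬(x = 0 ∧ y = 0 ∧ z = 0) := by
      by_cases hmab : m a = m b
      · exact ⟨1, -1, 0, by ring, by rw [hmab]; ring, by norm_num⟩
      · exact ⟨m b - m c, m c - m a, m a - m b, by ring, by ring,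
          fun h => hmab (by have := h.2.2; linarith [sub_eq_zero.mp this])⟩
    rcases le_or_gt 0 ((x * k a + y * k b + z * k c) -
        Lm * (x * n a + y * n b + z * n c)) with h | h
    · exact ⟨x, y, z, hxyz, hm0, hne, h⟩
    · refine ⟨-x, -y, -z, by linarith, by linarith, ?_, by nlinarith⟩
      intro h'
      exact hne ⟨by linarith [h'.1], by linarith [h'.2.1], by linarith [h'.2.2]⟩
  set d : Fin K → ℝ := fun p =>
    (if p = a then x else 0) + (if p = b then y else 0) + (if p = c then z else 0)
    with hd
  have hda : d a = x := by simp [hd, hab, hac]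
  have hdb : d b = y := by simp [hd, hab.symm, hbc]
  have hdc : d c = z := by simp [hd, hac.symm, hbc.symm]
  have hd0 : ∀ p, p ∉ ({a, b, c} : Finset (Fin K)) → d p = 0 := by
    intro p hp
    simp only [Finset.mem_insert, Finset.mem_singleton, not_or] at hp
    simp [hd, hp.1, hp.2.1, hp.2.2]
  have hdsum : ∀ f : Fin K → ℝ, ∑ p, d p * f p = x * f a + y * f b + z * f c :=
    fun f => sum3 hab hac hbc x y z f
  -- some coordinate of d is negative
  have hneg : ∃ q, d q < 0 := by
    by_contra h
    push_neg at h
    have hxn : 0 ≤ x := hda ▸ h a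
    have hyn : 0 ≤ y := hdb ▸ h b
    have hzn : 0 ≤ z := hdc ▸ h c
    exact hne ⟨by linarith, by linarith, by linarith⟩
  set T' : Finset (Fin K) := Finset.univ.filter fun p => d p < 0 with hT'
  have hT'ne : T'.Nonempty := by
    obtain ⟨q, hq⟩ := hneg
    exact ⟨q, by simp [hT', hq]⟩
  have hT'mem : ∀ p ∈ T', p ∈ ({a, b, c} : Finset (Fin K)) := by
    intro p hp
    rw [hT', Finset.mem_filter] at hp
    by_contra h
    rw [hd0 p h] at hp
    exact absurd hp.2 (lt_irrefl 0)
  obtain ⟨q, hqT', hqmin⟩ := T'.exists_min_image (fun p => l p / (-(d p))) hT'ne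
  have hdq : d q < 0 := by
    rw [hT', Finset.mem_filter] at hqT'; exact hqT'.2
  have hlq : 0 < l q := hmemS q (hT'mem q hqT')
  set s : ℝ := l q / (-(d q)) with hs
  have hspos : 0 < s := div_pos hlq (by linarith)
  set l' : Fin K → ℝ := fun p => l p + s * d p with hl'
  have hsum' : ∀ f : Fin K → ℝ,
      ∑ p, l' p * f p = (∑ p, l p * f p) + s * (x * f a + y * f b + z * f c) := by
    intro f
    have : ∀ p, l' p * f p = l p * f p + s * (d p * f p) := by
      intro p; simp [hl']; ring
    rw [Finset.sum_congr rfl (fun p _ => this p), Finset.sum_add_distrib,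
      ← Finset.mul_sum, hdsum]
  have hl'mem : l' ∈ stdSimplex ℝ (Fin K) := by
    constructor
    · intro p
      rcases lt_or_ge (d p) 0 with hdp | hdp
      · have hpT' : p ∈ T' := by simp [hT', hdp]
        have hle : s ≤ l p / (-(d p)) := hqmin p hpT'
        have : s * (-(d p)) ≤ l p := by
          rwa [le_div_iff₀ (by linarith)] at hle
        simp only [hl']
        nlinarith
      · exact add_nonneg (hl.1 p) (mul_nonneg hspos.le hdp)
    · have := hsum' (fun _ => 1)
      simp only [mul_one] at this
      rw [this, hl.2, hxyz]
      ring
  have hFq : Fq m n k l ≤ Fq m n k l' := by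
    have hB' : 0 ≤ s * ((x * k a + y * k b + z * k c) -
        Lm * (x * n a + y * n b + z * n c)) := mul_nonneg hspos.le hB
    simp only [Fq, hsum' k, hsum' m, hsum' n, ← hLm]
    rw [hm0]
    nlinarith [hB']
  have hl'q : l' q = 0 := by
    have hdq' : d q ≠ 0 := ne_of_lt hdq
    simp only [hl', hs]
    rw [div_mul_eq_mul_div, mul_div_assoc, div_neg, div_self hdq']
    ring
  have hsub' : (Finset.univ.filter fun p => l' p ≠ 0) ⊂ S := by
    constructor
    · intro p hp
      rw [Finset.mem_filter] at hp
      rw [hS, Finset.mem_filter]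
      refine ⟨Finset.mem_univ p, ?_⟩
      intro hlp
      have hpT : p ∉ ({a, b, c} : Finset (Fin K)) := by
        intro h
        exact absurd hlp (ne_of_gt (hmemS p h))
      have : l' p = 0 := by simp [hl', hlp, hd0 p hpT]
      exact hp.2 this
    · intro h
      have hqS : q ∈ S := hTS (hT'mem q hqT')
      have := h hqS
      rw [Finset.mem_filter] at this
      exact this.2 hl'q
  exact ⟨l', hl'mem, hFq, Finset.card_lt_card hsub'⟩


lemma main_le [Nonempty (Fin K)] (m n k : Fin K → ℝ) {l : Fin K → ℝ}
    (hl : l ∈ stdSimplex ℝ (Fin K)) : Fq m n k l ≤ Rhs m n k := by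
  classical
  suffices H : ∀ N (l : Fin K → ℝ), l ∈ stdSimplex ℝ (Fin K) →
      (Finset.univ.filter fun p => l p ≠ 0).card ≤ N → Fq m n k l ≤ Rhs m n k by
    exact H _ l hl le_rfl
  intro N
  induction N with
  | zero => intro l hl hcard; exact base m n k hl (le_trans hcard (by norm_num))
  | succ N ih =>
    intro l hl hcard
    by_cases h2 : (Finset.univ.filter fun p => l p ≠ 0).card ≤ 2
    · exact base m n k hl h2
    · push_neg at h2
      obtain ⟨l', hl', hle, hlt⟩ := descent m n k hl h2
      exact le_trans hle (ih l' hl' (by omega))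

end Stmt14Aux

theorem stmt14 (K : ℕ) (hK : 1 ≤ K) (m n k : Fin K → ℝ) :
    sSup ((fun l : Fin K → ℝ =>
        (∑ i, l i * k i) - (∑ i, l i * m i) * (∑ i, l i * n i)) ''
          stdSimplex ℝ (Fin K)) =
      ⨆ i : Fin K, ⨆ j : Fin K,
        sSup ((fun t : ℝ =>
          (t * k i + (1 - t) * k j) -
            (t * m i + (1 - t) * m j) * (t * n i + (1 - t) * n j)) ''
              Set.Icc (0 : ℝ) 1) := by
  haveI : Nonempty (Fin K) := ⟨⟨0, hK⟩⟩
  obtain ⟨i0⟩ := (inferInstance : Nonempty (Fin K))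
  have hfun : (fun l : Fin K → ℝ =>
      (∑ i, l i * k i) - (∑ i, l i * m i) * (∑ i, l i * n i)) = Stmt14Aux.Fq m n k := rfl
  have hedge : ∀ i j, (fun t : ℝ =>
      (t * k i + (1 - t) * k j) -
        (t * m i + (1 - t) * m j) * (t * n i + (1 - t) * n j)) =
      Stmt14Aux.edge m n k i j := fun i j => rfl
  rw [hfun]
  simp only [hedge]
  have hRhs : (⨆ i : Fin K, ⨆ j : Fin K,
      sSup (Stmt14Aux.edge m n k i j '' Set.Icc (0:ℝ) 1)) = Stmt14Aux.Rhs m n k := rfl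
  rw [hRhs]
  apply le_antisymm
  · refine csSup_le ⟨Stmt14Aux.Fq m n k (Stmt14Aux.pt i0 i0 1),
      ⟨Stmt14Aux.pt i0 i0 1, Stmt14Aux.pt_mem i0 i0 (by norm_num), rfl⟩⟩ ?_
    rintro v ⟨l, hl, rfl⟩
    exact Stmt14Aux.main_le m n k hl
  · refine ciSup_le fun i => ciSup_le fun j => ?_
    refine csSup_le ⟨Stmt14Aux.edge m n k i j 0, ⟨0, by norm_num, rfl⟩⟩ ?_
    rintro v ⟨t, ht, rfl⟩
    refine le_csSup (Stmt14Aux.bdd_lhs m n k) ?_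
    exact ⟨Stmt14Aux.pt i j t, Stmt14Aux.pt_mem i j ht, Stmt14Aux.Fq_pt m n k i j t⟩
end
end

section
/- Let 𝒫 be a nonempty set of probability measures and X, Y random variables with uniformly bounded second moments and means over 𝒫. Then with Ē[Z] = sup_{P∈𝒫} E_P[Z], the upper covariance C̄(X,Y) = sup_{P∈conv(𝒫)} Cov_P(X,Y) admits the unrestricted maximin representation C̄(X,Y) = sup over μ₂ ∈ ℝ of inf over μ₁ ∈ ℝ of Ē[(X−μ₁)(Y−μ₂)]. -/
open MeasureTheory ENNReal

variable {Ω : Type*} [MeasurableSpace Ω]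

section helpers

lemma int_mul {P : Measure Ω} {f g : Ω → ℝ}
    (hf : MemLp f 2 P) (hg : MemLp g 2 P) : Integrable (fun ω => f ω * g ω) P := by
  have h : MemLp (f • g) 1 P := hg.smul hf
  exact memLp_one_iff_integrable.1 h

lemma int_shift {P : Measure Ω} [IsProbabilityMeasure P] {X Y : Ω → ℝ}
    (hX : MemLp X 2 P) (hY : MemLp Y 2 P) (μ₁ μ₂ : ℝ) :
    ∫ ω, (X ω - μ₁) * (Y ω - μ₂) ∂P =
      (∫ ω, X ω * Y ω ∂P) - μ₁ * (∫ ω, Y ω ∂P) - μ₂ * (∫ ω, X ω ∂P) + μ₁ * μ₂ := by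
  have hXi : Integrable X P := hX.integrable one_le_two
  have hYi : Integrable Y P := hY.integrable one_le_two
  have hXY : Integrable (fun ω => X ω * Y ω) P := int_mul hX hY
  have hrw : (fun ω => (X ω - μ₁) * (Y ω - μ₂))
      = fun ω => X ω * Y ω - μ₂ * X ω - μ₁ * Y ω + μ₁ * μ₂ := by funext ω; ring
  have I1 : Integrable (fun ω => X ω * Y ω - μ₂ * X ω) P := hXY.sub (hXi.const_mul μ₂)
  have I2 : Integrable (fun ω => X ω * Y ω - μ₂ * X ω - μ₁ * Y ω) P := I1.sub (hYi.const_mul μ₁)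
  rw [hrw, integral_add I2 (integrable_const _), integral_sub I1 (hYi.const_mul μ₁),
    integral_sub hXY (hXi.const_mul μ₂), integral_const_mul, integral_const_mul, integral_const]
  simp [measure_univ]
  ring

lemma wne_top {n : ℕ} {w : Fin n → ℝ≥0∞} (hw : ∑ i, w i = 1) : ∀ i, w i ≠ ⊤ := by
  intro i
  refine ne_top_of_le_ne_top one_ne_top ?_
  rw [← hw]; exact Finset.single_le_sum (fun j _ => zero_le) (Finset.mem_univ i)

lemma wsum_toReal {n : ℕ} {w : Fin n → ℝ≥0∞} (hw : ∑ i, w i = 1) :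
    ∑ i, (w i).toReal = 1 := by
  rw [← ENNReal.toReal_sum (fun i _ => wne_top hw i), hw, ENNReal.toReal_one]

lemma int_mix {n : ℕ} {w : Fin n → ℝ≥0∞} {P : Fin n → Measure Ω} (hw : ∑ i, w i = 1)
    {f : Ω → ℝ} (hf : ∀ i, Integrable f (P i)) :
    ∫ ω, f ω ∂(∑ i, w i • P i) = ∑ i, (w i).toReal * ∫ ω, f ω ∂(P i) := by
  rw [integral_finset_sum_measure fun i _ => (hf i).smul_measure (wne_top hw i)]
  exact Finset.sum_congr rfl fun i _ => by rw [integral_smul_measure]; simp [smul_eq_mul]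

lemma prob_mix {n : ℕ} {w : Fin n → ℝ≥0∞} {P : Fin n → Measure Ω} (hw : ∑ i, w i = 1)
    (hP : ∀ i, IsProbabilityMeasure (P i)) : IsProbabilityMeasure (∑ i, w i • P i) := by
  constructor
  rw [Measure.finset_sum_apply]
  simp only [Measure.smul_apply, measure_univ, smul_eq_mul, mul_one]
  exact hw

lemma mix_abs_bound {n : ℕ} {w : Fin n → ℝ≥0∞} (hw : ∑ i, w i = 1)
    {a : Fin n → ℝ} {B : ℝ} (ha : ∀ i, |a i| ≤ B) :
    |∑ i, (w i).toReal * a i| ≤ B := by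
  calc |∑ i, (w i).toReal * a i| ≤ ∑ i, |(w i).toReal * a i| :=
        Finset.abs_sum_le_sum_abs _ _
    _ ≤ ∑ i, (w i).toReal * B := by
        refine Finset.sum_le_sum fun i _ => ?_
        rw [abs_mul, abs_of_nonneg ENNReal.toReal_nonneg]
        exact mul_le_mul_of_nonneg_left (ha i) ENNReal.toReal_nonneg
    _ = B := by rw [← Finset.sum_mul, wsum_toReal hw, one_mul]

lemma abs_integral_le_of_le {P : Measure Ω} {f g : Ω → ℝ} {c : ℝ}
    (hfi : Integrable f P) (hgi : Integrable g P) (h : ∀ ω, |f ω| ≤ g ω)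
    (hg : ∫ ω, g ω ∂P ≤ c) : |∫ ω, f ω ∂P| ≤ c := by
  calc |∫ ω, f ω ∂P| = ‖∫ ω, f ω ∂P‖ := (Real.norm_eq_abs _).symm
    _ ≤ ∫ ω, ‖f ω‖ ∂P := norm_integral_le_integral_norm _
    _ ≤ ∫ ω, g ω ∂P := by
        refine integral_mono hfi.norm hgi fun ω => ?_
        rw [Real.norm_eq_abs]; exact h ω
    _ ≤ c := hg

lemma aux_minimax (T : Set (ℝ × ℝ × ℝ)) (B C : ℝ) (hB0 : 0 ≤ B)
    (hxB : ∀ p ∈ T, |p.1| ≤ B) (hyB : ∀ p ∈ T, |p.2.1| ≤ B)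
    (hmix : ∀ p ∈ T, ∀ q ∈ T, ∀ l : ℝ, 0 ≤ l → l ≤ 1 →
      (l * p.2.2 + (1 - l) * q.2.2) -
        (l * p.1 + (1 - l) * q.1) * (l * p.2.1 + (1 - l) * q.2.1) ≤ C)
    (μ₂ ε : ℝ) (hε : 0 < ε) :
    ∃ μ₁ : ℝ, ∀ p ∈ T, p.2.2 - μ₁ * p.2.1 - μ₂ * p.1 + μ₁ * μ₂ ≤ C + ε := by
  by_contra hcon
  push_neg at hcon
  have hcov : ∀ p ∈ T, p.2.2 - p.1 * p.2.1 ≤ C := by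
    intro p hp
    have h := hmix p hp p hp 1 zero_le_one le_rfl
    nlinarith [h]
  set K : ℝ := B + |μ₂| with hK
  have hK0 : 0 ≤ K := by positivity
  set δ : ℝ := ε / (4 * (K + 1)) with hδdef
  have h4 : (0:ℝ) < 4 * (K + 1) := by positivity
  have hδ : 0 < δ := by positivity
  have hd : δ * (4 * (K + 1)) = ε := div_mul_cancel₀ _ (ne_of_gt h4)
  have hδK : 2 * δ * K ≤ ε / 2 := by nlinarith [hd, hδ.le, hK0]
  set A : Set ℝ :=
    {μ₁ | ∀ p ∈ T, p.2.1 ≤ μ₂ → p.2.2 - μ₁ * p.2.1 - μ₂ * p.1 + μ₁ * μ₂ ≤ C + ε} with hA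
  have hAne : (-B) ∈ A := by
    intro p hp hy
    have h1 := hcov p hp
    have h2 := abs_le.1 (hxB p hp)
    nlinarith [mul_nonpos_of_nonneg_of_nonpos (by linarith [h2.1] : (0:ℝ) ≤ p.1 + B)
      (by linarith : p.2.1 - μ₂ ≤ 0)]
  have hAub : ∀ a ∈ A, a ≤ B := by
    intro a ha
    by_contra hab
    push_neg at hab
    obtain ⟨p, hp, hpe⟩ := hcon a
    rcases le_or_gt p.2.1 μ₂ with hy | hy
    · exact absurd (ha p hp hy) (not_le.2 hpe)
    · have h1 := hcov p hp
      have h2 := abs_le.1 (hxB p hp)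
      nlinarith [mul_nonpos_of_nonpos_of_nonneg (by linarith [h2.2] : p.1 - a ≤ 0)
        (by linarith : (0:ℝ) ≤ p.2.1 - μ₂)]
  have hAbdd : BddAbove A := ⟨B, fun a ha => hAub a ha⟩
  set t : ℝ := sSup A with ht
  have htδA : t - δ ∈ A := by
    obtain ⟨a, haA, hlt⟩ := exists_lt_of_lt_csSup ⟨-B, hAne⟩ (by linarith [hδ] : t - δ < t)
    intro p hp hy
    have h := haA p hp hy
    nlinarith [mul_nonpos_of_nonpos_of_nonneg (by linarith : t - δ - a ≤ 0)
      (by linarith : (0:ℝ) ≤ μ₂ - p.2.1)]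
  have htδnA : t + δ ∉ A := fun h => absurd (le_csSup hAbdd h) (by linarith [hδ])
  rw [hA, Set.mem_setOf_eq] at htδnA
  push_neg at htδnA
  obtain ⟨pm, hpm, hym, hem⟩ := htδnA
  obtain ⟨pp, hpp, hep⟩ := hcon (t - δ)
  have hyp : μ₂ < pp.2.1 := by
    by_contra hyy
    push_neg at hyy
    exact absurd (htδA pp hpp hyy) (not_le.2 hep)
  have hymK : μ₂ - pm.2.1 ≤ K := by
    have h1 := abs_le.1 (hyB pm hpm)
    have h2 := le_abs_self μ₂
    simp only [hK]
    linarith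
  have hym0 : 0 ≤ μ₂ - pm.2.1 := by linarith
  have hu_m : C + ε / 2 ≤ pm.2.2 - (t - δ) * pm.2.1 - μ₂ * pm.1 + (t - δ) * μ₂ := by
    have h1 : C + ε < pm.2.2 - (t + δ) * pm.2.1 - μ₂ * pm.1 + (t + δ) * μ₂ := hem
    have h2 : 2 * δ * (μ₂ - pm.2.1) ≤ 2 * δ * K :=
      mul_le_mul_of_nonneg_left hymK (by positivity)
    linarith [hδK]
  rcases eq_or_lt_of_le hym with heq | hlt
  · have h5 : (t - δ) * pm.2.1 = (t - δ) * μ₂ := by rw [heq]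
    have h6 : pm.1 * pm.2.1 = pm.1 * μ₂ := by rw [heq]
    have h7 := hcov pm hpm
    linarith
  · set l : ℝ := (pp.2.1 - μ₂) / (pp.2.1 - pm.2.1) with hl
    have hden : 0 < pp.2.1 - pm.2.1 := by linarith
    have hl0 : 0 < l := div_pos (by linarith) hden
    have hl1 : l < 1 := (div_lt_one hden).2 (by linarith)
    have hYc : l * pm.2.1 + (1 - l) * pp.2.1 = μ₂ := by
      rw [hl]
      field_simp
      ring
    have hmx := hmix pm hpm pp hpp l hl0.le hl1.le
    have h7 : (t - δ) * (l * pm.2.1 + (1 - l) * pp.2.1) = (t - δ) * μ₂ := by rw [hYc]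
    have h8 : 0 ≤ l * ((pm.2.2 - (t - δ) * pm.2.1 - μ₂ * pm.1 + (t - δ) * μ₂) - (C + ε / 2)) :=
      mul_nonneg hl0.le (by linarith)
    have h9 : 0 ≤ (1 - l) *
        ((pp.2.2 - (t - δ) * pp.2.1 - μ₂ * pp.1 + (t - δ) * μ₂) - (C + ε / 2)) :=
      mul_nonneg (by linarith) (by linarith)
    have h10 : (l * pm.1 + (1 - l) * pp.1) * (l * pm.2.1 + (1 - l) * pp.2.1)
        = (l * pm.1 + (1 - l) * pp.1) * μ₂ := by rw [hYc]
    rw [h10] at hmx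
    linarith [hmx, h7, h8, h9, hε]

end helpers

theorem stmt16 (S : Set (Measure Ω)) (hS : S.Nonempty)
    (hprob : ∀ P ∈ S, IsProbabilityMeasure P) (X Y : Ω → ℝ)
    (hXY : ∀ P ∈ S, MemLp X 2 P ∧ MemLp Y 2 P)
    (hbdd : BddAbove ((fun P => (∫ ω, (X ω) ^ 2 ∂P) + ∫ ω, (Y ω) ^ 2 ∂P) '' S)) :
    ((sSup ((fun P => covP P X Y) '' convHullP S) : EReal)) =
      ⨆ μ₂ : ℝ, ⨅ μ₁ : ℝ,
        ((sSup ((fun P => ∫ ω, (X ω - μ₁) * (Y ω - μ₂) ∂P) '' S) : ℝ) : EReal) := by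
  classical
  obtain ⟨P₀, hP₀⟩ := hS
  obtain ⟨M, hM⟩ := hbdd
  have hM' : ∀ P ∈ S, (∫ ω, (X ω) ^ 2 ∂P) + ∫ ω, (Y ω) ^ 2 ∂P ≤ M := fun P hP =>
    hM (Set.mem_image_of_mem _ hP)
  -- basic nonnegativity
  have hsq : ∀ P : Measure Ω, 0 ≤ ∫ ω, (X ω) ^ 2 ∂P := fun P =>
    integral_nonneg fun ω => sq_nonneg _
  have hsqY : ∀ P : Measure Ω, 0 ≤ ∫ ω, (Y ω) ^ 2 ∂P := fun P =>
    integral_nonneg fun ω => sq_nonneg _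
  have hM0 : 0 ≤ M := le_trans (add_nonneg (hsq P₀) (hsqY P₀)) (hM' P₀ hP₀)
  set B : ℝ := M + 1 with hB
  have hB0 : 0 ≤ B := by linarith
  -- pointwise facts for P ∈ S
  have hfacts : ∀ P ∈ S, |∫ ω, X ω ∂P| ≤ B ∧ |∫ ω, Y ω ∂P| ≤ B ∧
      |∫ ω, X ω * Y ω ∂P| ≤ B := by
    intro P hP
    haveI := hprob P hP
    obtain ⟨hX2, hY2⟩ := hXY P hP
    have hXi : Integrable X P := hX2.integrable one_le_two
    have hYi : Integrable Y P := hY2.integrable one_le_two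
    have hX2i : Integrable (fun ω => (X ω) ^ 2) P := by
      have h := int_mul hX2 hX2; simpa [pow_two] using h
    have hY2i : Integrable (fun ω => (Y ω) ^ 2) P := by
      have h := int_mul hY2 hY2; simpa [pow_two] using h
    have hXYi : Integrable (fun ω => X ω * Y ω) P := int_mul hX2 hY2
    have hXb : ∫ ω, (X ω) ^ 2 ∂P ≤ M := by linarith [hsqY P, hM' P hP]
    have hYb : ∫ ω, (Y ω) ^ 2 ∂P ≤ M := by linarith [hsq P, hM' P hP]
    have hgX : Integrable (fun ω => (1 + (X ω) ^ 2) / 2) P :=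
      ((integrable_const (1:ℝ)).add hX2i).div_const 2
    have hgY : Integrable (fun ω => (1 + (Y ω) ^ 2) / 2) P :=
      ((integrable_const (1:ℝ)).add hY2i).div_const 2
    have hgXY : Integrable (fun ω => ((X ω) ^ 2 + (Y ω) ^ 2) / 2) P :=
      (hX2i.add hY2i).div_const 2
    refine ⟨?_, ?_, ?_⟩
    · refine abs_integral_le_of_le hXi hgX
        (fun ω => by nlinarith [sq_nonneg (|X ω| - 1), sq_abs (X ω), abs_nonneg (X ω)]) ?_
      rw [integral_div, integral_add (integrable_const _) hX2i, integral_const]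
      simp only [probReal_univ, mul_one, ENNReal.toReal_one, smul_eq_mul, one_mul]
      linarith
    · refine abs_integral_le_of_le hYi hgY
        (fun ω => by nlinarith [sq_nonneg (|Y ω| - 1), sq_abs (Y ω), abs_nonneg (Y ω)]) ?_
      rw [integral_div, integral_add (integrable_const _) hY2i, integral_const]
      simp only [probReal_univ, mul_one, ENNReal.toReal_one, smul_eq_mul, one_mul]
      linarith
    · refine abs_integral_le_of_le hXYi hgXY
        (fun ω => by
          rw [abs_mul]
          nlinarith [sq_nonneg (|X ω| - |Y ω|), sq_abs (X ω), sq_abs (Y ω),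
            abs_nonneg (X ω), abs_nonneg (Y ω)]) ?_
      rw [integral_div, integral_add hX2i hY2i]
      linarith [hM' P hP]
  -- S is contained in its hull
  have hSsub : S ⊆ convHullP S := by
    intro P hP
    exact ⟨1, fun _ => 1, fun _ => P, by simp, fun _ => hP, by simp⟩
  -- facts for hull elements
  have hullFacts : ∀ Q ∈ convHullP S, |∫ ω, X ω ∂Q| ≤ B ∧ |∫ ω, Y ω ∂Q| ≤ B ∧
      |∫ ω, X ω * Y ω ∂Q| ≤ B := by
    rintro Q ⟨n, w, P, hw, hPS, rfl⟩
    have hXi : ∀ i, Integrable X (P i) := fun i => by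
      haveI := hprob _ (hPS i); exact ((hXY _ (hPS i)).1).integrable one_le_two
    have hYi : ∀ i, Integrable Y (P i) := fun i => by
      haveI := hprob _ (hPS i); exact ((hXY _ (hPS i)).2).integrable one_le_two
    have hXYi : ∀ i, Integrable (fun ω => X ω * Y ω) (P i) := fun i =>
      int_mul (hXY _ (hPS i)).1 (hXY _ (hPS i)).2
    refine ⟨?_, ?_, ?_⟩
    · rw [int_mix hw hXi]
      exact mix_abs_bound hw fun i => (hfacts _ (hPS i)).1
    · rw [int_mix hw hYi]
      exact mix_abs_bound hw fun i => (hfacts _ (hPS i)).2.1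
    · rw [int_mix hw hXYi]
      exact mix_abs_bound hw fun i => (hfacts _ (hPS i)).2.2
  -- covariance bound on hull
  set Cb : ℝ := B + B * B with hCbdef
  have hCb : ∀ Q ∈ convHullP S, covP Q X Y ≤ Cb := by
    intro Q hQ
    obtain ⟨h1, h2, h3⟩ := hullFacts Q hQ
    have e1 := abs_le.1 h1
    have e2 := abs_le.1 h2
    have e3 := abs_le.1 h3
    rw [covP]
    have hp : |(∫ ω, X ω ∂Q) * ∫ ω, Y ω ∂Q| ≤ B * B := by
      rw [abs_mul]; exact mul_le_mul h1 h2 (abs_nonneg _) hB0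
    have := abs_le.1 hp
    have := le_abs_self (∫ ω, X ω * Y ω ∂Q)
    linarith
  have hCne : ((fun P => covP P X Y) '' convHullP S).Nonempty :=
    ⟨_, Set.mem_image_of_mem _ (hSsub hP₀)⟩
  have hCbdd : BddAbove ((fun P => covP P X Y) '' convHullP S) := by
    refine ⟨Cb, ?_⟩
    rintro v ⟨Q, hQ, rfl⟩
    exact hCb Q hQ
  set C : ℝ := sSup ((fun P => covP P X Y) '' convHullP S) with hC
  -- the inner sup set
  have hEne : ∀ μ₁ μ₂ : ℝ,
      ((fun P => ∫ ω, (X ω - μ₁) * (Y ω - μ₂) ∂P) '' S).Nonempty := fun μ₁ μ₂ =>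
    ⟨_, Set.mem_image_of_mem _ hP₀⟩
  have hEbdd : ∀ μ₁ μ₂ : ℝ,
      BddAbove ((fun P => ∫ ω, (X ω - μ₁) * (Y ω - μ₂) ∂P) '' S) := by
    intro μ₁ μ₂
    refine ⟨B + |μ₁| * B + |μ₂| * B + |μ₁ * μ₂|, ?_⟩
    rintro v ⟨P, hP, rfl⟩
    haveI := hprob P hP
    obtain ⟨hfx, hfy, hfm⟩ := hfacts P hP
    dsimp only
    rw [int_shift (hXY P hP).1 (hXY P hP).2]
    have e1 : -(μ₁ * ∫ ω, Y ω ∂P) ≤ |μ₁| * B := by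
      calc -(μ₁ * ∫ ω, Y ω ∂P) ≤ |μ₁ * ∫ ω, Y ω ∂P| := neg_le_abs _
        _ = |μ₁| * |∫ ω, Y ω ∂P| := abs_mul _ _
        _ ≤ |μ₁| * B := mul_le_mul_of_nonneg_left hfy (abs_nonneg _)
    have e2 : -(μ₂ * ∫ ω, X ω ∂P) ≤ |μ₂| * B := by
      calc -(μ₂ * ∫ ω, X ω ∂P) ≤ |μ₂ * ∫ ω, X ω ∂P| := neg_le_abs _
        _ = |μ₂| * |∫ ω, X ω ∂P| := abs_mul _ _
        _ ≤ |μ₂| * B := mul_le_mul_of_nonneg_left hfx (abs_nonneg _)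
    have e3 : ∫ ω, X ω * Y ω ∂P ≤ B := le_trans (le_abs_self _) hfm
    have e4 : μ₁ * μ₂ ≤ |μ₁ * μ₂| := le_abs_self _
    linarith
  -- key: for Q in hull, covP Q ≤ sSup over S of shifted integrals with μ₂ = mean of Y under Q
  have key3 : ∀ Q ∈ convHullP S, ∀ μ₁ : ℝ,
      covP Q X Y ≤ sSup ((fun P => ∫ ω, (X ω - μ₁) * (Y ω - (∫ ω, Y ω ∂Q)) ∂P) '' S) := by
    rintro Q ⟨n, w, P, hw, hPS, rfl⟩ μ₁
    set yQ : ℝ := ∫ ω, Y ω ∂(∑ i, w i • P i) with hyQ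
    have hXi : ∀ i, Integrable X (P i) := fun i => by
      haveI := hprob _ (hPS i); exact ((hXY _ (hPS i)).1).integrable one_le_two
    have hYi : ∀ i, Integrable Y (P i) := fun i => by
      haveI := hprob _ (hPS i); exact ((hXY _ (hPS i)).2).integrable one_le_two
    have hXYi : ∀ i, Integrable (fun ω => X ω * Y ω) (P i) := fun i =>
      int_mul (hXY _ (hPS i)).1 (hXY _ (hPS i)).2
    have hshift : ∀ i, ∫ ω, (X ω - μ₁) * (Y ω - yQ) ∂(P i) =
        (∫ ω, X ω * Y ω ∂(P i)) - μ₁ * (∫ ω, Y ω ∂(P i)) - yQ * (∫ ω, X ω ∂(P i))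
          + μ₁ * yQ := fun i => by
      haveI := hprob _ (hPS i)
      exact int_shift (hXY _ (hPS i)).1 (hXY _ (hPS i)).2 μ₁ yQ
    have hshift_int : ∀ i, Integrable (fun ω => (X ω - μ₁) * (Y ω - yQ)) (P i) := fun i => by
      haveI := hprob _ (hPS i)
      exact int_mul ((hXY _ (hPS i)).1.sub (memLp_const μ₁))
        ((hXY _ (hPS i)).2.sub (memLp_const yQ))
    have hm : ∫ ω, X ω * Y ω ∂(∑ i, w i • P i)
        = ∑ i, (w i).toReal * ∫ ω, X ω * Y ω ∂(P i) := int_mix hw hXYi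
    have hx : ∫ ω, X ω ∂(∑ i, w i • P i)
        = ∑ i, (w i).toReal * ∫ ω, X ω ∂(P i) := int_mix hw hXi
    have hy : yQ = ∑ i, (w i).toReal * ∫ ω, Y ω ∂(P i) := int_mix hw hYi
    have hQint : ∫ ω, (X ω - μ₁) * (Y ω - yQ) ∂(∑ i, w i • P i)
        = ∑ i, (w i).toReal * ∫ ω, (X ω - μ₁) * (Y ω - yQ) ∂(P i) := int_mix hw hshift_int
    -- covP Q equals the integral of the shifted product under Q
    have hceq : covP (∑ i, w i • P i) X Y
        = ∫ ω, (X ω - μ₁) * (Y ω - yQ) ∂(∑ i, w i • P i) := by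
      rw [covP, hQint]
      have hexp : ∑ i, (w i).toReal * ∫ ω, (X ω - μ₁) * (Y ω - yQ) ∂(P i)
          = (∑ i, (w i).toReal * ∫ ω, X ω * Y ω ∂(P i))
            - μ₁ * (∑ i, (w i).toReal * ∫ ω, Y ω ∂(P i))
            - yQ * (∑ i, (w i).toReal * ∫ ω, X ω ∂(P i)) + μ₁ * yQ := by
        calc ∑ i, (w i).toReal * ∫ ω, (X ω - μ₁) * (Y ω - yQ) ∂(P i)
            = ∑ i, ((w i).toReal * ∫ ω, X ω * Y ω ∂(P i)
                - μ₁ * ((w i).toReal * ∫ ω, Y ω ∂(P i))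
                - yQ * ((w i).toReal * ∫ ω, X ω ∂(P i))
                + (w i).toReal * (μ₁ * yQ)) :=
              Finset.sum_congr rfl fun i _ => by rw [hshift i]; ring
          _ = _ := by
              rw [Finset.sum_add_distrib, Finset.sum_sub_distrib, Finset.sum_sub_distrib,
                ← Finset.mul_sum, ← Finset.mul_sum, ← Finset.sum_mul, wsum_toReal hw, one_mul]
      rw [hexp, ← hx, ← hy, ← hm]
      ring
    rw [hceq, hQint]
    have hle : ∀ i, ∫ ω, (X ω - μ₁) * (Y ω - yQ) ∂(P i)
        ≤ sSup ((fun P => ∫ ω, (X ω - μ₁) * (Y ω - yQ) ∂P) '' S) := fun i =>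
      le_csSup (hEbdd μ₁ yQ) (Set.mem_image_of_mem _ (hPS i))
    calc ∑ i, (w i).toReal * ∫ ω, (X ω - μ₁) * (Y ω - yQ) ∂(P i)
        ≤ ∑ i, (w i).toReal * sSup ((fun P => ∫ ω, (X ω - μ₁) * (Y ω - yQ) ∂P) '' S) :=
          Finset.sum_le_sum fun i _ =>
            mul_le_mul_of_nonneg_left (hle i) ENNReal.toReal_nonneg
      _ = sSup ((fun P => ∫ ω, (X ω - μ₁) * (Y ω - yQ) ∂P) '' S) := by
          rw [← Finset.sum_mul, wsum_toReal hw, one_mul]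
    -- identify the LHS (an `EReal` supremum) with the coercion of the real supremum
  have hLHS : sSup ((fun P => ((covP P X Y : ℝ) : EReal)) '' convHullP S) = ((C : ℝ) : EReal) := by
    have h1 : (fun P => ((covP P X Y : ℝ) : EReal)) '' convHullP S
        = (fun x : ℝ => (x : EReal)) '' ((fun P => covP P X Y) '' convHullP S) := by
      rw [Set.image_image]
    rw [h1]
    exact (Monotone.map_csSup_of_continuousAt continuous_coe_real_ereal.continuousAt
      EReal.coe_strictMono.monotone hCne hCbdd).symm
  rw [show (sSup ((fun P => ((covP P X Y : ℝ) : EReal)) '' convHullP S)) = ((C : ℝ) : EReal) from hLHS]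
  apply le_antisymm
  · -- C ≤ sup-inf
    by_contra hlt
    push_neg at hlt
    obtain ⟨c, hc1, hc2⟩ := EReal.exists_between_coe_real hlt
    obtain ⟨v, hv, hvc⟩ := exists_lt_of_lt_csSup hCne (EReal.coe_lt_coe_iff.1 hc2)
    obtain ⟨Q, hQ, rfl⟩ := hv
    have h1 : ((covP Q X Y : ℝ) : EReal) ≤ ⨆ μ₂ : ℝ, ⨅ μ₁ : ℝ,
        ((sSup ((fun P => ∫ ω, (X ω - μ₁) * (Y ω - μ₂) ∂P) '' S) : ℝ) : EReal) := by
      refine le_trans (le_iInf fun μ₁ => EReal.coe_le_coe_iff.2 (key3 Q hQ μ₁)) ?_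
      exact le_iSup (fun μ₂ => ⨅ μ₁ : ℝ,
        ((sSup ((fun P => ∫ ω, (X ω - μ₁) * (Y ω - μ₂) ∂P) '' S) : ℝ) : EReal)) (∫ ω, Y ω ∂Q)
    exact absurd h1 (not_le.2 (lt_trans hc1 (EReal.coe_lt_coe_iff.2 hvc)))
  · -- sup-inf ≤ C
    refine iSup_le fun μ₂ => ?_
    by_contra hlt
    push_neg at hlt
    obtain ⟨c, hc1, hc2⟩ := EReal.exists_between_coe_real hlt
    have hCc : C < c := EReal.coe_lt_coe_iff.1 hc1
    set T : Set (ℝ × ℝ × ℝ) :=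
      (fun P => (∫ ω, X ω ∂P, ∫ ω, Y ω ∂P, ∫ ω, X ω * Y ω ∂P)) '' S with hT
    have hmixT : ∀ p ∈ T, ∀ q ∈ T, ∀ l : ℝ, 0 ≤ l → l ≤ 1 →
        (l * p.2.2 + (1 - l) * q.2.2) -
          (l * p.1 + (1 - l) * q.1) * (l * p.2.1 + (1 - l) * q.2.1) ≤ C := by
      rintro p ⟨P₁, h₁, rfl⟩ q ⟨P₂, h₂, rfl⟩ l hl0 hl1
      dsimp only
      set w : Fin 2 → ℝ≥0∞ := ![ENNReal.ofReal l, ENNReal.ofReal (1 - l)] with hwdef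
      set Pf : Fin 2 → Measure Ω := ![P₁, P₂] with hPf
      have hwsum : ∑ i, w i = 1 := by
        rw [Fin.sum_univ_two]
        simp only [hwdef, Matrix.cons_val_zero, Matrix.cons_val_one, Matrix.head_cons]
        rw [← ENNReal.ofReal_add hl0 (by linarith)]
        norm_num
      have hQmem : (∑ i, w i • Pf i) ∈ convHullP S :=
        ⟨2, w, Pf, hwsum, fun i => by fin_cases i <;> [exact h₁; exact h₂], rfl⟩
      have hcle : covP (∑ i, w i • Pf i) X Y ≤ C :=
        le_csSup hCbdd (Set.mem_image_of_mem _ hQmem)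
      have hXi : ∀ i, Integrable X (Pf i) := by
        intro i; fin_cases i
        · haveI := hprob _ h₁; exact ((hXY _ h₁).1).integrable one_le_two
        · haveI := hprob _ h₂; exact ((hXY _ h₂).1).integrable one_le_two
      have hYi : ∀ i, Integrable Y (Pf i) := by
        intro i; fin_cases i
        · haveI := hprob _ h₁; exact ((hXY _ h₁).2).integrable one_le_two
        · haveI := hprob _ h₂; exact ((hXY _ h₂).2).integrable one_le_two
      have hXYi : ∀ i, Integrable (fun ω => X ω * Y ω) (Pf i) := by
        intro i; fin_cases i
        · exact int_mul (hXY _ h₁).1 (hXY _ h₁).2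
        · exact int_mul (hXY _ h₂).1 (hXY _ h₂).2
      have ht1 : (w 0).toReal = l := by
        simp [hwdef, ENNReal.toReal_ofReal hl0]
      have ht2 : (w 1).toReal = 1 - l := by
        simp [hwdef, ENNReal.toReal_ofReal (by linarith : (0:ℝ) ≤ 1 - l)]
      have hP0 : Pf 0 = P₁ := rfl
      have hP1 : Pf 1 = P₂ := rfl
      have hxx : ∫ ω, X ω ∂(∑ i, w i • Pf i)
          = l * ∫ ω, X ω ∂P₁ + (1 - l) * ∫ ω, X ω ∂P₂ := by
        rw [int_mix hwsum hXi, Fin.sum_univ_two, ht1, ht2, hP0, hP1]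
      have hyy : ∫ ω, Y ω ∂(∑ i, w i • Pf i)
          = l * ∫ ω, Y ω ∂P₁ + (1 - l) * ∫ ω, Y ω ∂P₂ := by
        rw [int_mix hwsum hYi, Fin.sum_univ_two, ht1, ht2, hP0, hP1]
      have hmm : ∫ ω, X ω * Y ω ∂(∑ i, w i • Pf i)
          = l * ∫ ω, X ω * Y ω ∂P₁ + (1 - l) * ∫ ω, X ω * Y ω ∂P₂ := by
        rw [int_mix hwsum hXYi, Fin.sum_univ_two, ht1, ht2, hP0, hP1]
      rw [covP, hxx, hyy, hmm] at hcle
      exact hcle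
    have hxT : ∀ p ∈ T, |p.1| ≤ B := by
      rintro p ⟨P, hP, rfl⟩; exact (hfacts P hP).1
    have hyT : ∀ p ∈ T, |p.2.1| ≤ B := by
      rintro p ⟨P, hP, rfl⟩; exact (hfacts P hP).2.1
    obtain ⟨μ₁, hμ₁⟩ := aux_minimax T B C hB0 hxT hyT hmixT μ₂ (c - C) (by linarith)
    have hgle : sSup ((fun P => ∫ ω, (X ω - μ₁) * (Y ω - μ₂) ∂P) '' S) ≤ c := by
      refine csSup_le (hEne μ₁ μ₂) ?_
      rintro v ⟨P, hP, rfl⟩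
      haveI := hprob P hP
      dsimp only
      rw [int_shift (hXY P hP).1 (hXY P hP).2]
      have h := hμ₁ _ (Set.mem_image_of_mem
        (fun P => (∫ ω, X ω ∂P, ∫ ω, Y ω ∂P, ∫ ω, X ω * Y ω ∂P)) hP)
      dsimp only at h
      linarith
    have hfin : (⨅ μ₁' : ℝ,
        ((sSup ((fun P => ∫ ω, (X ω - μ₁') * (Y ω - μ₂) ∂P) '' S) : ℝ) : EReal)) ≤ (c : EReal) := by
      refine le_trans (iInf_le _ μ₁) ?_
      exact EReal.coe_le_coe_iff.2 hgle
    exact absurd hfin (not_le.2 hc2)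
end
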